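/- arXiv:1107.4293 — 11 statements merged into one kernel-verified Lean document; each statement's English description precedes it below -/
import Mathlib

section
/- Suppose assumptions (A1) and (A2) hold and the continuity bound b(w,v) ≤ C₂‖w‖_U‖v‖_V holds. Then for every continuous linear functional l : V → ℝ there exists a unique 𝒰 ∈ U such that b(𝒰, v) = l(v) for all v ∈ V, and moreover C₁‖𝒰‖_U ≤ ‖l‖_{V'}, where ‖l‖_{V'} = sup_{0≠v∈V} l(v)/‖v‖_V. -/
open InnerProductSpace

/-- Well-posedness of the variational problem under assumptions (A1), (A2) and continuity:
existence and uniqueness of the solution, together with the stability bound `C₁‖𝒰‖ ≤ ‖l‖`. -/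
theorem wellposedness_of_infsup
    {U V : Type*} [NormedAddCommGroup U] [InnerProductSpace ℝ U] [CompleteSpace U]
    [NormedAddCommGroup V] [InnerProductSpace ℝ V] [CompleteSpace V]
    (b : U →ₗ[ℝ] V →ₗ[ℝ] ℝ) (C₁ C₂ : ℝ)
    (hC₁ : 0 < C₁) (hC₂ : 0 ≤ C₂)
    -- (A1)
    (hA1 : ∀ w : U, (∀ v : V, b w v = 0) → w = 0)
    -- (A2)
    (hA2 : ∀ v : V, C₁ * ‖v‖ ≤ ⨆ w : {w : U // w ≠ 0}, b w.1 v / ‖w.1‖)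
    -- continuity bound
    (hb : ∀ (w : U) (v : V), b w v ≤ C₂ * ‖w‖ * ‖v‖)
    (l : V →L[ℝ] ℝ) :
    ∃ 𝒰 : U, (∀ v : V, b 𝒰 v = l v) ∧ C₁ * ‖𝒰‖ ≤ ‖l‖ ∧
      ∀ 𝒰' : U, (∀ v : V, b 𝒰' v = l v) → 𝒰' = 𝒰 := by
  -- two-sided continuity bound
  have habs : ∀ (w : U) (v : V), |b w v| ≤ C₂ * ‖w‖ * ‖v‖ := by
    intro w v
    rcases abs_cases (b w v) with ⟨h, _⟩ | ⟨h, _⟩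
    · rw [h]; exact hb w v
    · rw [h]
      have := hb (-w) v
      simpa using this
  -- the flipped bilinear form as a continuous bilinear map
  let B : V →L[ℝ] U →L[ℝ] ℝ :=
    LinearMap.mkContinuous₂ b.flip C₂ (fun v w => by
      simpa [Real.norm_eq_abs, mul_comm, mul_left_comm, mul_assoc] using habs w v)
  -- S : V →L U with ⟪S v, w⟫ = b w v
  let S₀ : V →ₗ[ℝ] U :=
    { toFun := fun v => (toDual ℝ U).symm (B v)
      map_add' := fun v₁ v₂ => by simp
      map_smul' := fun c v => by simp }
  have hS₀ : ∀ v : V, ‖S₀ v‖ ≤ C₂ * ‖v‖ := by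
    intro v
    have h1 : ‖S₀ v‖ = ‖B v‖ := (toDual ℝ U).symm.norm_map (B v)
    have hBnorm : ‖B‖ ≤ C₂ := LinearMap.mkContinuous₂_norm_le _ hC₂ _
    rw [h1]
    exact (B.le_opNorm v).trans (mul_le_mul_of_nonneg_right hBnorm (norm_nonneg v))
  let S : V →L[ℝ] U := LinearMap.mkContinuous S₀ C₂ hS₀
  have hS : ∀ (v : V) (w : U), ⟪S v, w⟫_ℝ = b w v := by
    intro v w
    show ⟪(toDual ℝ U).symm (B v), w⟫_ℝ = b w v
    rw [toDual_symm_apply]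
    rfl
  -- S is bounded below
  have hlow : ∀ v : V, C₁ * ‖v‖ ≤ ‖S v‖ := by
    intro v
    refine le_trans (hA2 v) ?_
    rcases isEmpty_or_nonempty {w : U // w ≠ 0} with hE | hN
    · simp only [Real.iSup_of_isEmpty]; exact norm_nonneg (S v)
    · refine ciSup_le fun w => ?_
      rw [div_le_iff₀ (norm_pos_iff.mpr w.2)]
      calc b w.1 v = ⟪S v, w.1⟫_ℝ := (hS v w.1).symm
        _ ≤ ‖S v‖ * ‖w.1‖ := real_inner_le_norm _ _
  have hlow' : ∀ v : V, ‖v‖ ≤ C₁⁻¹ * ‖S v‖ := fun v => by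
    rw [le_inv_mul_iff₀ hC₁]; exact hlow v
  -- S injective
  have hinj : LinearMap.ker (S : V →ₗ[ℝ] U) = ⊥ := by
    rw [LinearMap.ker_eq_bot']
    intro v hv
    have h := hlow' v
    rw [show S v = 0 from hv] at h
    simp only [norm_zero, mul_zero] at h
    exact norm_le_zero_iff.mp h
  -- range of S is closed
  have hanti : AntilipschitzWith ⟨C₁⁻¹, by positivity⟩ S :=
    ContinuousLinearMap.antilipschitz_of_bound S hlow'
  have hclosed : IsClosed ((LinearMap.range (S : V →ₗ[ℝ] U) : Submodule ℝ U) : Set U) := by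
    have : ((LinearMap.range (S : V →ₗ[ℝ] U) : Submodule ℝ U) : Set U) = Set.range S := by
      ext x; simp [LinearMap.mem_range]
    rw [this]
    exact hanti.isClosed_range S.uniformContinuous
  -- range of S is all of U
  have hrange : LinearMap.range (S : V →ₗ[ℝ] U) = ⊤ := by
    haveI : CompleteSpace (LinearMap.range (S : V →ₗ[ℝ] U) : Submodule ℝ U) :=
      hclosed.completeSpace_coe
    rw [← Submodule.orthogonal_eq_bot_iff]
    rw [Submodule.eq_bot_iff]
    intro u hu
    refine hA1 u fun v => ?_
    have := hu (S v) (LinearMap.mem_range_self _ v)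
    rw [← hS v u]
    exact this
  -- S as a continuous linear equivalence
  let E := ContinuousLinearEquiv.ofBijective S hinj hrange
  have hE : ∀ v : V, E v = S v := fun v => rfl
  -- the solution
  set 𝒰 : U := (toDual ℝ U).symm (l.comp (E.symm : U →L[ℝ] V)) with h𝒰
  have hsol : ∀ v : V, b 𝒰 v = l v := by
    intro v
    rw [← hS v 𝒰, real_inner_comm, h𝒰, toDual_symm_apply]
    simp only [ContinuousLinearMap.comp_apply, ContinuousLinearEquiv.coe_coe]
    rw [← hE v, E.symm_apply_apply]
  refine ⟨𝒰, hsol, ?_, ?_⟩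
  · -- stability
    set v₀ : V := E.symm 𝒰 with hv₀
    have hSv₀ : S v₀ = 𝒰 := by rw [← hE v₀, hv₀, E.apply_symm_apply]
    have h1 : ‖𝒰‖ ^ 2 = b 𝒰 v₀ := by
      rw [← hS v₀ 𝒰, hSv₀, real_inner_self_eq_norm_sq]
    have h2 : b 𝒰 v₀ ≤ ‖l‖ * ‖v₀‖ := by
      rw [hsol v₀]
      exact le_trans (le_abs_self _) (l.le_opNorm v₀)
    have h3 : C₁ * ‖v₀‖ ≤ ‖𝒰‖ := by rw [← hSv₀]; exact hlow v₀
    have h4 : (0:ℝ) ≤ ‖l‖ := norm_nonneg l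
    have h5 : (0:ℝ) ≤ ‖𝒰‖ := norm_nonneg 𝒰
    have h6 : (0:ℝ) ≤ ‖v₀‖ := norm_nonneg v₀
    rcases eq_or_lt_of_le h5 with h0 | h0
    · rw [← h0, mul_zero]; exact h4
    · have key : C₁ * ‖𝒰‖ * ‖𝒰‖ ≤ ‖l‖ * ‖𝒰‖ := by
        nlinarith [mul_le_mul_of_nonneg_left h2 (le_of_lt hC₁),
          mul_le_mul_of_nonneg_left h3 h4]
      exact le_of_mul_le_mul_right key h0
  · -- uniqueness
    intro 𝒰' hsol'
    have : ∀ v : V, b (𝒰' - 𝒰) v = 0 := by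
      intro v
      have := hsol' v
      have h2 := hsol v
      simp only [map_sub, LinearMap.sub_apply]
      rw [this, h2, sub_self]
    have := hA1 _ this
    exact sub_eq_zero.mp this
end

section
/- Suppose assumptions (A1) and (A2) hold and the continuity bound b(w,v) ≤ C₂‖w‖_U‖v‖_V holds. Then the inf-sup condition C₁‖w‖_U ≤ sup_{0≠v∈V} b(w,v)/‖v‖_V holds for every w ∈ U, with the same constant C₁ as in (A2). -/
open scoped RealInnerProductSpace

/-- Under (A1), (A2) and the continuity bound, the inf-sup condition
`C₁‖w‖_U ≤ sup_{0≠v∈V} b(w,v)/‖v‖_V` holds for every `w ∈ U`, with the same constant `C₁`. -/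
theorem infsup_transfer
    {U V : Type*} [NormedAddCommGroup U] [InnerProductSpace ℝ U] [CompleteSpace U]
    [NormedAddCommGroup V] [InnerProductSpace ℝ V] [CompleteSpace V]
    (b : U →ₗ[ℝ] V →ₗ[ℝ] ℝ) (C₁ C₂ : ℝ)
    (hC₁ : 0 < C₁) (hC₂ : 0 ≤ C₂)
    -- (A1)
    (hA1 : ∀ w : U, (∀ v : V, b w v = 0) → w = 0)
    -- (A2)
    (hA2 : ∀ v : V, C₁ * ‖v‖ ≤ ⨆ w : {w : U // w ≠ 0}, b w.1 v / ‖w.1‖)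
    -- continuity bound
    (hb : ∀ (w : U) (v : V), b w v ≤ C₂ * ‖w‖ * ‖v‖) :
    ∀ w : U, C₁ * ‖w‖ ≤ ⨆ v : {v : V // v ≠ 0}, b w v.1 / ‖v.1‖ := by
  -- absolute value bound
  have habs : ∀ (w : U) (v : V), ‖b w v‖ ≤ C₂ * ‖w‖ * ‖v‖ := by
    intro w v
    rw [Real.norm_eq_abs, abs_le]
    constructor
    · have := hb (-w) v
      simp only [map_neg, LinearMap.neg_apply, norm_neg] at this
      linarith
    · exact hb w v
  -- associated operator T : U → V with ⟪T w, v⟫ = b w v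
  obtain ⟨T, hTinner⟩ : ∃ T : U →L[ℝ] V, ∀ (w : U) (v : V), ⟪T w, v⟫ = b w v := by
    refine ⟨((InnerProductSpace.toDual ℝ V).symm.toLinearIsometry.toContinuousLinearMap).comp
      (LinearMap.mkContinuous₂ b C₂ habs), fun w v => ?_⟩
    simp [InnerProductSpace.toDual_symm_apply]
  -- adjoint S : V → U with ⟪S v, w⟫ = b w v
  obtain ⟨S, hSinner⟩ : ∃ S : V →L[ℝ] U, ∀ (v : V) (w : U), ⟪S v, w⟫ = b w v := by
    refine ⟨ContinuousLinearMap.adjoint T, fun v w => ?_⟩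
    rw [ContinuousLinearMap.adjoint_inner_left, real_inner_comm, hTinner]
  -- lower bound for S from (A2)
  have hlow : ∀ v : V, C₁ * ‖v‖ ≤ ‖S v‖ := by
    intro v
    refine (hA2 v).trans (Real.iSup_le ?_ (norm_nonneg _))
    rintro ⟨w, hw⟩
    have hwpos : 0 < ‖w‖ := norm_pos_iff.mpr hw
    rw [div_le_iff₀ hwpos, ← hSinner]
    exact real_inner_le_norm _ _
  -- S is antilipschitz, hence has closed range
  have hanti : AntilipschitzWith ⟨C₁⁻¹, by positivity⟩ S := by
    apply ContinuousLinearMap.antilipschitz_of_bound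
    intro v
    show ‖v‖ ≤ C₁⁻¹ * ‖S v‖
    rw [inv_mul_eq_div, le_div_iff₀ hC₁]
    linarith [hlow v]
  have hclosed : IsClosed (Set.range S) :=
    hanti.isClosed_range S.uniformContinuous
  -- range S is dense since its orthogonal complement is trivial by (A1)
  have horth : (LinearMap.range (S : V →ₗ[ℝ] U))ᗮ = ⊥ := by
    rw [Submodule.eq_bot_iff]
    intro u hu
    apply hA1
    intro v
    rw [← hSinner]
    exact (Submodule.mem_orthogonal _ u).mp hu (S v) ⟨v, rfl⟩
  have hdense : (LinearMap.range (S : V →ₗ[ℝ] U)).topologicalClosure = ⊤ :=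
    Submodule.topologicalClosure_eq_top_iff.mpr horth
  have hsurj : ∀ w : U, ∃ v : V, S v = w := by
    intro w
    have hco : (LinearMap.range (S : V →ₗ[ℝ] U) : Set U) = Set.range S := by
      ext x; simp [LinearMap.mem_range]
    have hcl : (LinearMap.range (S : V →ₗ[ℝ] U)).topologicalClosure
        = LinearMap.range (S : V →ₗ[ℝ] U) := by
      apply SetLike.coe_injective
      simpa [Submodule.topologicalClosure_coe, hco] using hclosed.closure_eq
    have : w ∈ LinearMap.range (S : V →ₗ[ℝ] U) := by
      rw [← hcl, hdense]; trivial
    exact this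
  -- key bound: C₁ ‖w‖ ≤ ‖T w‖
  have hkey : ∀ w : U, C₁ * ‖w‖ ≤ ‖T w‖ := by
    intro w
    rcases eq_or_ne w 0 with rfl | hw
    · simp
    obtain ⟨v₀, hv₀⟩ := hsurj w
    have hwpos : 0 < ‖w‖ := norm_pos_iff.mpr hw
    have h1 : ‖w‖ * ‖w‖ = b w v₀ := by
      rw [← hSinner, hv₀, real_inner_self_eq_norm_mul_norm]
    have h2 : b w v₀ ≤ ‖T w‖ * ‖v₀‖ := by
      rw [← hTinner]; exact real_inner_le_norm _ _
    have h3 : C₁ * ‖v₀‖ ≤ ‖w‖ := by rw [← hv₀]; exact hlow v₀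
    nlinarith [norm_nonneg (T w), norm_nonneg v₀]
  -- conclude
  intro w
  rcases eq_or_ne w 0 with rfl | hw
  · simp only [norm_zero, mul_zero]
    apply Real.iSup_nonneg
    rintro ⟨v, hv⟩
    simp
  · have hTw : T w ≠ 0 := by
      intro h
      have hk := hkey w
      rw [h, norm_zero] at hk
      have hwpos : 0 < ‖w‖ := norm_pos_iff.mpr hw
      nlinarith
    have hbdd : BddAbove (Set.range fun v : {v : V // v ≠ 0} => b w v.1 / ‖v.1‖) := by
      refine ⟨C₂ * ‖w‖, ?_⟩
      rintro x ⟨⟨v, hv⟩, rfl⟩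
      have hvpos : 0 < ‖v‖ := norm_pos_iff.mpr hv
      rw [div_le_iff₀ hvpos]
      calc b w v ≤ ‖b w v‖ := le_abs_self _
        _ ≤ C₂ * ‖w‖ * ‖v‖ := habs w v
    have hle : C₁ * ‖w‖ ≤ b w (T w) / ‖T w‖ := by
      have h1 : b w (T w) = ‖T w‖ * ‖T w‖ := by
        rw [← hTinner, real_inner_self_eq_norm_mul_norm]
      rw [h1, mul_div_assoc, div_self (norm_ne_zero_iff.mpr hTw), mul_one]
      exact hkey w
    exact hle.trans (le_ciSup hbdd ⟨T w, hTw⟩)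
end

section
/- Suppose assumptions (A1) and (A2) hold and the continuity bound b(w,v) ≤ C₂‖w‖_U‖v‖_V holds. Then the two inf-sup constants of b coincide: inf_{0≠w∈U} sup_{0≠v∈V} |b(w,v)|/(‖w‖_U‖v‖_V) = inf_{0≠v∈V} sup_{0≠w∈U} |b(w,v)|/(‖w‖_U‖v‖_V). -/
open InnerProductSpace ContinuousLinearMap RealInnerProductSpace

/-- The operator associated to a continuous bilinear form via Riesz representation. -/
noncomputable def opOfBilin' {U V : Type*} [NormedAddCommGroup U] [InnerProductSpace ℝ U]
    [NormedAddCommGroup V] [InnerProductSpace ℝ V] [CompleteSpace V]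
    (B : U →L[ℝ] V →L[ℝ] ℝ) : U →L[ℝ] V :=
  { toLinearMap :=
      { toFun := fun w => (InnerProductSpace.toDual ℝ V).symm (B w)
        map_add' := fun x y => by simp
        map_smul' := fun c x => by simp }
    cont := (InnerProductSpace.toDual ℝ V).symm.continuous.comp B.continuous }

lemma inner_opOfBilin' {U V : Type*} [NormedAddCommGroup U] [InnerProductSpace ℝ U]
    [NormedAddCommGroup V] [InnerProductSpace ℝ V] [CompleteSpace V]
    (B : U →L[ℝ] V →L[ℝ] ℝ) (w : U) (v : V) :
    ⟪opOfBilin' B w, v⟫_ℝ = B w v :=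
  InnerProductSpace.toDual_symm_apply

lemma aux_iSup_inner {V : Type*} [NormedAddCommGroup V] [InnerProductSpace ℝ V]
    [Nontrivial V] (a : V) (c : ℝ) (hc : 0 < c) :
    ⨆ v : {v : V // v ≠ 0}, |⟪a, v.1⟫_ℝ| / (c * ‖v.1‖) = ‖a‖ / c := by
  have hne : Nonempty {v : V // v ≠ 0} := by
    obtain ⟨v, hv⟩ := exists_ne (0 : V); exact ⟨⟨v, hv⟩⟩
  have hbd : ∀ v : {v : V // v ≠ 0}, |⟪a, v.1⟫_ℝ| / (c * ‖v.1‖) ≤ ‖a‖ / c := by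
    intro v
    have hv : 0 < ‖v.1‖ := norm_pos_iff.mpr v.2
    rw [div_le_div_iff₀ (by positivity) hc]
    have := abs_real_inner_le_norm a v.1
    nlinarith
  have hbdd : BddAbove (Set.range fun v : {v : V // v ≠ 0} =>
      |⟪a, v.1⟫_ℝ| / (c * ‖v.1‖)) := ⟨‖a‖ / c, by rintro _ ⟨v, rfl⟩; exact hbd v⟩
  refine le_antisymm (ciSup_le hbd) ?_
  by_cases ha : a = 0
  · subst ha
    simp only [inner_zero_left, abs_zero, zero_div, norm_zero, ciSup_const]
    exact le_rfl
  · have h0 : 0 < ‖a‖ := norm_pos_iff.mpr ha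
    have := le_ciSup hbdd ⟨a, ha⟩
    refine le_trans (le_of_eq ?_) this
    rw [real_inner_self_eq_norm_mul_norm, abs_of_nonneg (by positivity)]
    field_simp

lemma aux_iInf_eq {X Y : Type*} [NormedAddCommGroup X] [NormedSpace ℝ X]
    [NormedAddCommGroup Y] [NormedSpace ℝ Y] [Nontrivial X]
    (T : X →L[ℝ] Y) (Tinv : Y →L[ℝ] X)
    (h1 : ∀ x, Tinv (T x) = x) (h2 : ∀ y, T (Tinv y) = y) :
    ⨅ x : {x : X // x ≠ 0}, ‖T x.1‖ / ‖x.1‖ = 1 / ‖Tinv‖ := by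
  obtain ⟨x₀, hx₀⟩ := exists_ne (0 : X)
  haveI hneX : Nonempty {x : X // x ≠ 0} := ⟨⟨x₀, hx₀⟩⟩
  have hTinj : ∀ x : X, x ≠ 0 → T x ≠ 0 := fun x hx hTx =>
    hx (by rw [← h1 x, hTx, map_zero])
  have hle : ∀ x : X, ‖x‖ ≤ ‖Tinv‖ * ‖T x‖ := fun x => by
    conv_lhs => rw [← h1 x]
    exact Tinv.le_opNorm _
  have hN : 0 < ‖Tinv‖ := by
    by_contra h
    push_neg at h
    have := hle x₀
    have h0 : 0 < ‖x₀‖ := norm_pos_iff.mpr hx₀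
    nlinarith [norm_nonneg (T x₀)]
  have hbdd : BddBelow (Set.range fun x : {x : X // x ≠ 0} => ‖T x.1‖ / ‖x.1‖) :=
    ⟨0, by rintro _ ⟨x, rfl⟩; positivity⟩
  refine le_antisymm ?_ ?_
  · refine le_of_forall_pos_le_add fun ε hε => ?_
    set N := ‖Tinv‖
    have h1r : 0 < 1 + ε * N := by positivity
    set r : ℝ := N / (1 + ε * N) with hrdef
    have hrpos : 0 < r := div_pos hN h1r
    have hrlt : r < N := by
      rw [hrdef, div_lt_iff₀ h1r]
      nlinarith [mul_pos (mul_pos hε hN) hN]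
    obtain ⟨y, hy1, hy2⟩ := Tinv.exists_lt_apply_of_lt_opNorm hrlt
    have hTy : Tinv y ≠ 0 := by
      intro h
      rw [h, norm_zero] at hy2
      exact absurd hy2 (not_lt.mpr hrpos.le)
    have hTypos : 0 < ‖Tinv y‖ := lt_trans hrpos hy2
    have hx : (Tinv y : X) ≠ 0 := hTy
    have key : ‖T (Tinv y)‖ / ‖Tinv y‖ ≤ 1 / N + ε := by
      rw [h2 y]
      have h1N : 1 / N + ε = 1 / r := by
        rw [hrdef]
        field_simp
      rw [h1N, div_le_div_iff₀ hTypos hrpos]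
      nlinarith [norm_nonneg y]
    exact le_trans (ciInf_le hbdd ⟨Tinv y, hx⟩) key
  · refine le_ciInf fun x => ?_
    have hx : 0 < ‖x.1‖ := norm_pos_iff.mpr x.2
    have hTx : 0 < ‖T x.1‖ := norm_pos_iff.mpr (hTinj _ x.2)
    rw [div_le_div_iff₀ hN hx]
    nlinarith [hle x.1]

/-- Under (A1), (A2) and the continuity bound, the two inf-sup constants of `b` coincide. -/
theorem infsup_constants_coincide
    {U V : Type*} [NormedAddCommGroup U] [InnerProductSpace ℝ U] [CompleteSpace U]
    [NormedAddCommGroup V] [InnerProductSpace ℝ V] [CompleteSpace V]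
    (b : U →ₗ[ℝ] V →ₗ[ℝ] ℝ) (C₁ C₂ : ℝ)
    (hC₁ : 0 < C₁) (hC₂ : 0 ≤ C₂)
    -- (A1)
    (hA1 : ∀ w : U, (∀ v : V, b w v = 0) → w = 0)
    -- (A2)
    (hA2 : ∀ v : V, C₁ * ‖v‖ ≤ ⨆ w : {w : U // w ≠ 0}, b w.1 v / ‖w.1‖)
    -- continuity bound
    (hb : ∀ (w : U) (v : V), b w v ≤ C₂ * ‖w‖ * ‖v‖) :
    (⨅ w : {w : U // w ≠ 0}, ⨆ v : {v : V // v ≠ 0}, |b w.1 v.1| / (‖w.1‖ * ‖v.1‖)) =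
      ⨅ v : {v : V // v ≠ 0}, ⨆ w : {w : U // w ≠ 0}, |b w.1 v.1| / (‖w.1‖ * ‖v.1‖) := by
  classical
  -- trivial cases
  by_cases hU : Nontrivial U
  case neg =>
    have : Subsingleton U := not_nontrivial_iff_subsingleton.mp hU
    have hE : IsEmpty {w : U // w ≠ 0} := ⟨fun w => w.2 (Subsingleton.elim _ _)⟩
    rw [Real.iInf_of_isEmpty]
    rcases isEmpty_or_nonempty {v : V // v ≠ 0} with hV | hV
    · rw [Real.iInf_of_isEmpty]
    · have : ∀ v : {v : V // v ≠ 0},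
          (⨆ w : {w : U // w ≠ 0}, |b w.1 v.1| / (‖w.1‖ * ‖v.1‖)) = 0 := fun v =>
        Real.iSup_of_isEmpty _
      rw [iInf_congr this, ciInf_const]
  case pos =>
  have hV : Nontrivial V := by
    by_contra h
    have : Subsingleton V := not_nontrivial_iff_subsingleton.mp h
    obtain ⟨w, hw⟩ := exists_ne (0 : U)
    exact hw (hA1 w fun v => by rw [Subsingleton.elim v 0, map_zero])
  -- the bounded bilinear form and associated operators
  have habs : ∀ (w : U) (v : V), ‖b w v‖ ≤ C₂ * ‖w‖ * ‖v‖ := by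
    intro w v
    rw [Real.norm_eq_abs, abs_le]
    constructor
    · have := hb w (-v)
      simp only [map_neg, norm_neg] at this
      linarith
    · exact hb w v
  haveI hneU : Nonempty {w : U // w ≠ 0} := by
    obtain ⟨w, hw⟩ := exists_ne (0 : U); exact ⟨⟨w, hw⟩⟩
  haveI hneV : Nonempty {v : V // v ≠ 0} := by
    obtain ⟨v, hv⟩ := exists_ne (0 : V); exact ⟨⟨v, hv⟩⟩
  set B : U →L[ℝ] V →L[ℝ] ℝ := LinearMap.mkContinuous₂ b C₂ habs with hB
  have hBapp : ∀ (w : U) (v : V), B w v = b w v := fun w v => rfl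
  set T : U →L[ℝ] V := opOfBilin' B with hT
  set S : V →L[ℝ] U := ContinuousLinearMap.adjoint T with hS
  have hTb : ∀ (w : U) (v : V), ⟪T w, v⟫_ℝ = b w v := fun w v => inner_opOfBilin' B w v
  have hSb : ∀ (w : U) (v : V), ⟪w, S v⟫_ℝ = b w v := fun w v => by
    rw [hS, ContinuousLinearMap.adjoint_inner_right, hTb]
  -- S is bounded below
  have hSlow : ∀ v : V, C₁ * ‖v‖ ≤ ‖S v‖ := by
    intro v
    refine le_trans (hA2 v) (ciSup_le fun w => ?_)
    have hw : 0 < ‖w.1‖ := norm_pos_iff.mpr w.2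
    rw [div_le_iff₀ hw, ← hSb]
    calc ⟪w.1, S v⟫_ℝ ≤ ‖w.1‖ * ‖S v‖ := real_inner_le_norm _ _
      _ = ‖S v‖ * ‖w.1‖ := mul_comm _ _
  have hSanti : AntilipschitzWith (⟨C₁, hC₁.le⟩)⁻¹ S := by
    refine AddMonoidHomClass.antilipschitz_of_bound S fun v => ?_
    have := hSlow v
    change ‖v‖ ≤ C₁⁻¹ * ‖S v‖
    rw [← div_eq_inv_mul, le_div_iff₀ hC₁]
    linarith
  -- S has dense range
  have hdense : S.range.topologicalClosure = ⊤ := by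
    rw [← Submodule.orthogonal_orthogonal_eq_closure]
    have horth : S.rangeᗮ = ⊥ := by
      rw [Submodule.eq_bot_iff]
      intro u hu
      refine hA1 u fun v => ?_
      have := (Submodule.mem_orthogonal _ u).mp hu (S v) (LinearMap.mem_range_self _ v)
      rw [real_inner_comm, hSb] at this
      exact this
    rw [horth, Submodule.bot_orthogonal_eq_top]
  have hbij : Function.Bijective S :=
    (S.bijective_iff_dense_range_and_antilipschitz).mpr ⟨hdense, _, hSanti⟩
  set E : V ≃L[ℝ] U := ContinuousLinearEquiv.ofBijective S
    (LinearMap.ker_eq_bot_of_injective hbij.1) (LinearMap.range_eq_top.mpr hbij.2) with hE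
  have hEapp : ∀ v : V, (E v : U) = S v := fun v => rfl
  set Sinv : U →L[ℝ] V := (E.symm : U →L[ℝ] V) with hSinv
  have hSSinv : ∀ u : U, S (Sinv u) = u := fun u => by
    rw [← hEapp]; exact E.apply_symm_apply u
  have hSinvS : ∀ v : V, Sinv (S v) = v := fun v => by
    rw [← hEapp]; exact E.symm_apply_apply v
  set Tinv : V →L[ℝ] U := ContinuousLinearMap.adjoint Sinv with hTinv
  -- T and Tinv are inverse to each other
  have hcomp1 : Tinv.comp T = ContinuousLinearMap.id ℝ U := by
    have hST : ContinuousLinearMap.adjoint S = T := by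
      rw [hS, ContinuousLinearMap.adjoint_adjoint]
    have : S.comp Sinv = ContinuousLinearMap.id ℝ U := by
      ext u; exact hSSinv u
    calc Tinv.comp T = (ContinuousLinearMap.adjoint Sinv).comp
          (ContinuousLinearMap.adjoint S) := by rw [hST]
      _ = ContinuousLinearMap.adjoint (S.comp Sinv) :=
          (ContinuousLinearMap.adjoint_comp S Sinv).symm
      _ = ContinuousLinearMap.id ℝ U := by rw [this, ContinuousLinearMap.adjoint_id]
  have hcomp2 : T.comp Tinv = ContinuousLinearMap.id ℝ V := by
    have hST : ContinuousLinearMap.adjoint S = T := by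
      rw [hS, ContinuousLinearMap.adjoint_adjoint]
    have : Sinv.comp S = ContinuousLinearMap.id ℝ V := by
      ext v; exact hSinvS v
    calc T.comp Tinv = (ContinuousLinearMap.adjoint S).comp
          (ContinuousLinearMap.adjoint Sinv) := by rw [hST]
      _ = ContinuousLinearMap.adjoint (Sinv.comp S) :=
          (ContinuousLinearMap.adjoint_comp Sinv S).symm
      _ = ContinuousLinearMap.id ℝ V := by rw [this, ContinuousLinearMap.adjoint_id]
  have h1 : ∀ u : U, Tinv (T u) = u := fun u => by
    rw [← ContinuousLinearMap.comp_apply, hcomp1, ContinuousLinearMap.id_apply]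
  have h2 : ∀ v : V, T (Tinv v) = v := fun v => by
    rw [← ContinuousLinearMap.comp_apply, hcomp2, ContinuousLinearMap.id_apply]
  -- rewrite the two sides
  have hLHS : (⨅ w : {w : U // w ≠ 0}, ⨆ v : {v : V // v ≠ 0},
      |b w.1 v.1| / (‖w.1‖ * ‖v.1‖)) = ⨅ w : {w : U // w ≠ 0}, ‖T w.1‖ / ‖w.1‖ := by
    refine iInf_congr fun w => ?_
    have hw : 0 < ‖w.1‖ := norm_pos_iff.mpr w.2
    calc (⨆ v : {v : V // v ≠ 0}, |b w.1 v.1| / (‖w.1‖ * ‖v.1‖))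
        = ⨆ v : {v : V // v ≠ 0}, |⟪T w.1, v.1⟫_ℝ| / (‖w.1‖ * ‖v.1‖) := by
          refine iSup_congr fun v => ?_
          rw [hTb]
      _ = ‖T w.1‖ / ‖w.1‖ := aux_iSup_inner _ _ hw
  have hRHS : (⨅ v : {v : V // v ≠ 0}, ⨆ w : {w : U // w ≠ 0},
      |b w.1 v.1| / (‖w.1‖ * ‖v.1‖)) = ⨅ v : {v : V // v ≠ 0}, ‖S v.1‖ / ‖v.1‖ := by
    refine iInf_congr fun v => ?_
    have hv : 0 < ‖v.1‖ := norm_pos_iff.mpr v.2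
    calc (⨆ w : {w : U // w ≠ 0}, |b w.1 v.1| / (‖w.1‖ * ‖v.1‖))
        = ⨆ w : {w : U // w ≠ 0}, |⟪S v.1, w.1⟫_ℝ| / (‖v.1‖ * ‖w.1‖) := by
          refine iSup_congr fun w => ?_
          rw [real_inner_comm, hSb, mul_comm]
      _ = ‖S v.1‖ / ‖v.1‖ := aux_iSup_inner _ _ hv
  rw [hLHS, hRHS, aux_iInf_eq T Tinv h1 h2, aux_iInf_eq S Sinv hSinvS hSSinv]
  rw [hTinv]
  congr 1
  exact ContinuousLinearMap.adjoint.norm_map Sinv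
end

section
/- Assume Vʳ ≠ {0}. For every w ∈ U_h, the following three quantities are equal: sup_{0≠v∈Vʳ} b(w,v)/‖v‖_V, the norm ‖Tʳw‖_V, and sup_{0≠v∈V_hʳ} b(w,v)/‖v‖_V (where a supremum over an empty index set is interpreted as 0). -/
open scoped InnerProductSpace

lemma aux_sup_inner {V : Type*} [NormedAddCommGroup V] [InnerProductSpace ℝ V]
    (x : V) (S : Submodule ℝ V) (hx : x ∈ S)
    (f : {v : V // v ∈ S ∧ v ≠ 0} → ℝ) (hf : ∀ v, f v = ⟪x, v.1⟫_ℝ / ‖v.1‖)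
    (hne : Nonempty {v : V // v ∈ S ∧ v ≠ 0}) : (⨆ v, f v) = ‖x‖ := by
  have hub : ∀ v : {v : V // v ∈ S ∧ v ≠ 0}, f v ≤ ‖x‖ := by
    intro v
    rw [hf]
    have hvn : 0 < ‖v.1‖ := norm_pos_iff.mpr v.2.2
    rw [div_le_iff₀ hvn]
    exact real_inner_le_norm x v.1
  by_cases hx0 : x = 0
  · have : ∀ v : {v : V // v ∈ S ∧ v ≠ 0}, f v = 0 := by
      intro v; rw [hf, hx0, inner_zero_left, zero_div]
    simp [this, hx0, ciSup_const]
  · apply le_antisymm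
    · exact ciSup_le hub
    · have hmem : x ∈ S ∧ x ≠ 0 := ⟨hx, hx0⟩
      have := le_ciSup ⟨‖x‖, Set.forall_mem_range.mpr hub⟩ (⟨x, hmem⟩ : {v : V // v ∈ S ∧ v ≠ 0})
      rw [hf ⟨x, hmem⟩] at this
      rw [real_inner_self_eq_norm_mul_norm] at this
      calc ‖x‖ = ‖x‖ * ‖x‖ / ‖x‖ := by
              field_simp
        _ ≤ ⨆ v, f v := this

/-- For `w ∈ U_h`, the supremum of `b(w,v)/‖v‖` over nonzero `v ∈ Vʳ`, the norm `‖Tʳw‖_V`,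
and the supremum of `b(w,v)/‖v‖` over nonzero `v ∈ V_hʳ = Tʳ(U_h)` all coincide
(empty suprema being interpreted as `0`). -/
theorem sup_eq_norm_Tr_eq_sup
    {U V : Type*} [NormedAddCommGroup U] [InnerProductSpace ℝ U] [CompleteSpace U]
    [NormedAddCommGroup V] [InnerProductSpace ℝ V] [CompleteSpace V]
    (b : U →ₗ[ℝ] V →ₗ[ℝ] ℝ)
    (Uh : Submodule ℝ U) (Vr : Submodule ℝ V)
    [FiniteDimensional ℝ Uh] [FiniteDimensional ℝ Vr]
    (hVr : Vr ≠ ⊥)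
    -- trial-to-test operator
    (T : U →ₗ[ℝ] V) (hTmem : ∀ w : U, T w ∈ Vr)
    (hT : ∀ w : U, ∀ v ∈ Vr, ⟪T w, v⟫_ℝ = b w v) :
    ∀ w ∈ Uh,
      (⨆ v : {v : V // v ∈ Vr ∧ v ≠ 0}, b w v.1 / ‖v.1‖) = ‖T w‖ ∧
      ‖T w‖ = ⨆ v : {v : V // v ∈ Submodule.map T Uh ∧ v ≠ 0}, b w v.1 / ‖v.1‖ := by
  intro w hw
  constructor
  · obtain ⟨v0, hv0, hv0ne⟩ := Submodule.exists_mem_ne_zero_of_ne_bot hVr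
    exact aux_sup_inner (T w) Vr (hTmem w) _
      (fun v => by rw [hT w v.1 v.2.1]) ⟨⟨v0, hv0, hv0ne⟩⟩
  · by_cases hne : Nonempty {v : V // v ∈ Submodule.map T Uh ∧ v ≠ 0}
    · exact (aux_sup_inner (T w) (Submodule.map T Uh) ⟨w, hw, rfl⟩ _
        (fun v => by
          obtain ⟨u, _, hu⟩ := v.2.1
          rw [hT w v.1 (hu ▸ hTmem u)]) hne).symm
    · have h0 : T w = 0 := by
        by_contra h
        exact hne ⟨⟨T w, ⟨w, hw, rfl⟩, h⟩⟩
      rw [not_nonempty_iff] at hne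
      rw [h0, Real.iSup_of_isEmpty, norm_zero]
end

section
/- Suppose assumptions (A1) and (A2) hold, the continuity bound b(w,v) ≤ C₂‖w‖_U‖v‖_V holds, and a Fortin operator Π with constant C_Π > 0 exists. Then the restriction of Tʳ to U_h is injective; in particular, dim V_hʳ = dim U_h. -/
open scoped InnerProductSpace

/-- Under the assumptions of Theorem 2.1, the restriction of `Tʳ` to `U_h` is injective;
in particular `dim V_hʳ = dim U_h`. -/
theorem Tr_injective_on_Uh
    {U V : Type*} [NormedAddCommGroup U] [InnerProductSpace ℝ U] [CompleteSpace U]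
    [NormedAddCommGroup V] [InnerProductSpace ℝ V] [CompleteSpace V]
    (b : U →ₗ[ℝ] V →ₗ[ℝ] ℝ) (C₁ C₂ Cpi : ℝ)
    (hC₁ : 0 < C₁) (hC₂ : 0 ≤ C₂) (hCpi : 0 < Cpi)
    -- (A1)
    (hA1 : ∀ w : U, (∀ v : V, b w v = 0) → w = 0)
    -- (A2)
    (hA2 : ∀ v : V, C₁ * ‖v‖ ≤ ⨆ w : {w : U // w ≠ 0}, b w.1 v / ‖w.1‖)
    -- continuity bound
    (hb : ∀ (w : U) (v : V), b w v ≤ C₂ * ‖w‖ * ‖v‖)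
    -- discrete spaces
    (Uh : Submodule ℝ U) (Vr : Submodule ℝ V)
    [FiniteDimensional ℝ Uh] [FiniteDimensional ℝ Vr]
    -- trial-to-test operator
    (T : U →ₗ[ℝ] V) (hTmem : ∀ w : U, T w ∈ Vr)
    (hT : ∀ w : U, ∀ v ∈ Vr, ⟪T w, v⟫_ℝ = b w v)
    -- Fortin operator
    (Pi : V →ₗ[ℝ] V) (hPimem : ∀ v : V, Pi v ∈ Vr)
    (hPi : ∀ w ∈ Uh, ∀ v : V, b w (v - Pi v) = 0)
    (hPin : ∀ v : V, ‖Pi v‖ ≤ Cpi * ‖v‖) :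
    Set.InjOn T (Uh : Set U) ∧
      Module.finrank ℝ (Submodule.map T Uh) = Module.finrank ℝ Uh := by

  have key : ∀ w ∈ Uh, T w = 0 → w = 0 := by
    intro w hw hTw
    apply hA1
    intro v
    have h1 : b w (v - Pi v) = 0 := hPi w hw v
    have h2 : b w (Pi v) = 0 := by
      rw [← hT w (Pi v) (hPimem v), hTw, inner_zero_left]
    have := (b w).map_sub v (Pi v)
    have hv : b w v = b w (v - Pi v) + b w (Pi v) := by
      rw [this]; ring
    rw [hv, h1, h2, add_zero]
  have inj : Set.InjOn T (Uh : Set U) := by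
    intro x hx y hy hxy
    have hxy' : T (x - y) = 0 := by rw [map_sub, hxy, sub_self]
    have := key (x - y) (Uh.sub_mem hx hy) hxy'
    exact sub_eq_zero.mp this
  refine ⟨inj, ?_⟩
  have hker : LinearMap.ker (T.domRestrict Uh) = ⊥ := by
    rw [LinearMap.ker_eq_bot']
    intro m hm
    have : T (m : U) = 0 := hm
    have := key m m.2 this
    exact Subtype.ext this
  have hrange : LinearMap.range (T.domRestrict Uh) = Submodule.map T Uh :=
    LinearMap.range_domRestrict Uh T
  calc Module.finrank ℝ (Submodule.map T Uh)
      = Module.finrank ℝ (LinearMap.range (T.domRestrict Uh)) := by rw [hrange]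
    _ = Module.finrank ℝ Uh :=
      LinearMap.finrank_range_of_inj (LinearMap.ker_eq_bot.mp hker)
end

section
/- Suppose assumptions (A1) and (A2) hold, the continuity bound b(w,v) ≤ C₂‖w‖_U‖v‖_V holds, and a Fortin operator Π with constant C_Π > 0 exists. Then the two-sided norm equivalence (C₁/C_Π)‖w‖_U ≤ ‖Tʳw‖_V ≤ C₂‖w‖_U holds for every w ∈ U_h. -/
open scoped InnerProductSpace

/-- Two-sided norm equivalence `(C₁/C_Π)‖w‖_U ≤ ‖Tʳw‖_V ≤ C₂‖w‖_U` on `U_h`. -/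
theorem Tr_norm_equivalence
    {U V : Type*} [NormedAddCommGroup U] [InnerProductSpace ℝ U] [CompleteSpace U]
    [NormedAddCommGroup V] [InnerProductSpace ℝ V] [CompleteSpace V]
    (b : U →ₗ[ℝ] V →ₗ[ℝ] ℝ) (C₁ C₂ Cpi : ℝ)
    (hC₁ : 0 < C₁) (hC₂ : 0 ≤ C₂) (hCpi : 0 < Cpi)
    -- (A1)
    (hA1 : ∀ w : U, (∀ v : V, b w v = 0) → w = 0)
    -- (A2)
    (hA2 : ∀ v : V, C₁ * ‖v‖ ≤ ⨆ w : {w : U // w ≠ 0}, b w.1 v / ‖w.1‖)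
    -- continuity bound
    (hb : ∀ (w : U) (v : V), b w v ≤ C₂ * ‖w‖ * ‖v‖)
    -- discrete spaces
    (Uh : Submodule ℝ U) (Vr : Submodule ℝ V)
    [FiniteDimensional ℝ Uh] [FiniteDimensional ℝ Vr]
    -- trial-to-test operator
    (T : U →ₗ[ℝ] V) (hTmem : ∀ w : U, T w ∈ Vr)
    (hT : ∀ w : U, ∀ v ∈ Vr, ⟪T w, v⟫_ℝ = b w v)
    -- Fortin operator
    (Pi : V →ₗ[ℝ] V) (hPimem : ∀ v : V, Pi v ∈ Vr)
    (hPi : ∀ w ∈ Uh, ∀ v : V, b w (v - Pi v) = 0)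
    (hPin : ∀ v : V, ‖Pi v‖ ≤ Cpi * ‖v‖) :
    ∀ w ∈ Uh, C₁ / Cpi * ‖w‖ ≤ ‖T w‖ ∧ ‖T w‖ ≤ C₂ * ‖w‖ := by
  -- Construct the "adjoint" operator S : V →L[ℝ] U with ⟪S v, u⟫ = b u v.
  have habs : ∀ (v : V) (w : U), ‖b.flip v w‖ ≤ C₂ * ‖v‖ * ‖w‖ := by
    intro v w
    simp only [LinearMap.flip_apply, Real.norm_eq_abs, abs_le]
    have h1 := hb w v
    have h2 := hb w (-v)
    rw [map_neg, norm_neg] at h2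
    constructor <;> nlinarith
  set bc : V →L[ℝ] U →L[ℝ] ℝ := LinearMap.mkContinuous₂ b.flip C₂ habs with hbc
  have hbcval : ∀ (v : V) (w : U), bc v w = b w v := fun v w => rfl
  have hbcn : ∀ v : V, ‖bc v‖ ≤ C₂ * ‖v‖ := by
    intro v
    apply ContinuousLinearMap.opNorm_le_bound _ (by positivity)
    intro w; rw [hbcval]; exact habs v w
  set S₀ : V →ₗ[ℝ] U :=
    { toFun := fun v => (InnerProductSpace.toDual ℝ U).symm (bc v)
      map_add' := fun x y => by simp
      map_smul' := fun c x => by simp [map_smul, starRingEnd_apply] } with hS₀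
  set S : V →L[ℝ] U := S₀.mkContinuous C₂ (by
    intro v
    calc ‖S₀ v‖ = ‖bc v‖ := (InnerProductSpace.toDual ℝ U).symm.norm_map (bc v)
    _ ≤ C₂ * ‖v‖ := hbcn v) with hS
  have hSinner : ∀ (v : V) (u : U), ⟪S v, u⟫_ℝ = b u v := by
    intro v u
    show ⟪(InnerProductSpace.toDual ℝ U).symm (bc v), u⟫_ℝ = b u v
    rw [InnerProductSpace.toDual_symm_apply]
    exact hbcval v u
  -- S is bounded below by C₁.
  have hlow : ∀ v : V, C₁ * ‖v‖ ≤ ‖S v‖ := by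
    intro v
    by_cases hne : Nonempty {w : U // w ≠ 0}
    · refine (hA2 v).trans (ciSup_le ?_)
      rintro ⟨w', hw'⟩
      have hwpos : (0:ℝ) < ‖w'‖ := norm_pos_iff.mpr hw'
      rw [div_le_iff₀ hwpos]
      calc b w' v = ⟪S v, w'⟫_ℝ := (hSinner v w').symm
      _ ≤ ‖S v‖ * ‖w'‖ := real_inner_le_norm _ _
    · have : IsEmpty {w : U // w ≠ 0} := not_nonempty_iff.mp hne
      have h0 : (⨆ w : {w : U // w ≠ 0}, b w.1 v / ‖w.1‖) = 0 := Real.iSup_of_isEmpty _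
      have := hA2 v
      rw [h0] at this
      exact this.trans (norm_nonneg _)
  -- S has closed range, hence (by A1) S is surjective.
  have hanti : AntilipschitzWith (⟨C₁, hC₁.le⟩ : NNReal)⁻¹ S := by
    apply ContinuousLinearMap.antilipschitz_of_bound
    intro v
    have := hlow v
    show ‖v‖ ≤ C₁⁻¹ * ‖S v‖
    rw [← div_eq_inv_mul, le_div_iff₀ hC₁]
    linarith [hlow v]
  have hclosed : IsClosed (Set.range S) := hanti.isClosed_range S.uniformContinuous
  have hrangeset : (LinearMap.range (S : V →ₗ[ℝ] U) : Set U) = Set.range S := by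
    ext x; simp [LinearMap.mem_range]
  set K : Submodule ℝ U := LinearMap.range (S : V →ₗ[ℝ] U) with hK
  have hKclosed : IsClosed (K : Set U) := by rw [hK, hrangeset]; exact hclosed
  haveI : CompleteSpace K := hKclosed.completeSpace_coe
  have hKorth : Kᗮ = ⊥ := by
    rw [Submodule.eq_bot_iff]
    intro u hu
    apply hA1
    intro v
    rw [← hSinner v u]
    exact (Submodule.mem_orthogonal K u).mp hu (S v) ⟨v, rfl⟩
  have hKtop : K = ⊤ := Submodule.orthogonal_eq_bot_iff.mp hKorth
  have hSurj : ∀ u : U, ∃ v : V, S v = u := by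
    intro u
    have : u ∈ K := hKtop ▸ Submodule.mem_top
    obtain ⟨v, hv⟩ := this
    exact ⟨v, hv⟩
  -- Main argument
  intro w hw
  constructor
  · -- lower bound
    obtain ⟨v, hv⟩ := hSurj w
    have hnv : C₁ * ‖v‖ ≤ ‖w‖ := by rw [← hv]; exact hlow v
    have hsq : ‖w‖ ^ 2 = b w v := by
      rw [← real_inner_self_eq_norm_sq, ← hv, hSinner, hv]
    have hfort : b w v = b w (Pi v) := by
      have := hPi w hw v
      rw [map_sub] at this
      linarith
    have hbd : b w (Pi v) ≤ ‖T w‖ * (Cpi * ‖v‖) := by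
      rw [← hT w (Pi v) (hPimem v)]
      calc ⟪T w, Pi v⟫_ℝ ≤ ‖T w‖ * ‖Pi v‖ := real_inner_le_norm _ _
      _ ≤ ‖T w‖ * (Cpi * ‖v‖) := by
          apply mul_le_mul_of_nonneg_left (hPin v) (norm_nonneg _)
    by_cases hw0 : ‖w‖ = 0
    · rw [hw0, mul_zero]; exact norm_nonneg _
    · have hwpos : (0:ℝ) < ‖w‖ := lt_of_le_of_ne (norm_nonneg _) (Ne.symm hw0)
      have hvle : ‖v‖ ≤ ‖w‖ / C₁ := (le_div_iff₀' hC₁).mpr hnv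
      have key : ‖w‖ ^ 2 ≤ ‖T w‖ * (Cpi * (‖w‖ / C₁)) := by
        calc ‖w‖ ^ 2 = b w v := hsq
        _ = b w (Pi v) := hfort
        _ ≤ ‖T w‖ * (Cpi * ‖v‖) := hbd
        _ ≤ ‖T w‖ * (Cpi * (‖w‖ / C₁)) := by
            apply mul_le_mul_of_nonneg_left _ (norm_nonneg _)
            exact mul_le_mul_of_nonneg_left hvle hCpi.le
      rw [div_mul_eq_mul_div, div_le_iff₀ hCpi]
      have h1 : C₁ * ‖w‖ ^ 2 ≤ ‖T w‖ * Cpi * ‖w‖ := by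
        rw [mul_comm C₁]
        calc ‖w‖^2 * C₁ ≤ (‖T w‖ * (Cpi * (‖w‖ / C₁))) * C₁ :=
          mul_le_mul_of_nonneg_right key hC₁.le
        _ = ‖T w‖ * Cpi * ‖w‖ := by field_simp
      have := (mul_le_mul_iff_of_pos_right hwpos).mp (by rw [sq] at h1; linarith [h1] : C₁ * ‖w‖ * ‖w‖ ≤ ‖T w‖ * Cpi * ‖w‖)
      linarith
  · -- upper bound
    have hsq : ‖T w‖ ^ 2 = b w (T w) := by
      rw [← hT w (T w) (hTmem w), real_inner_self_eq_norm_sq]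
    by_cases h0 : ‖T w‖ = 0
    · rw [h0]; positivity
    · have hpos : (0:ℝ) < ‖T w‖ := lt_of_le_of_ne (norm_nonneg _) (Ne.symm h0)
      have : ‖T w‖ ^ 2 ≤ C₂ * ‖w‖ * ‖T w‖ := hsq ▸ hb w (T w)
      rw [sq] at this
      exact (mul_le_mul_iff_of_pos_right hpos).mp this
end

section
/- Suppose assumptions (A1) and (A2) hold, the continuity bound b(w,v) ≤ C₂‖w‖_U‖v‖_V holds, and a Fortin operator Π with constant C_Π > 0 exists. Then for every continuous linear functional l : V → ℝ, the practical DPG discrete problem has a unique solution: there exists exactly one u ∈ U_h such that b(u, v) = l(v) for all v ∈ V_hʳ. -/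
open scoped InnerProductSpace

/-- Unique solvability of the practical DPG discrete problem. -/
theorem practical_dpg_unique_solvability
    {U V : Type*} [NormedAddCommGroup U] [InnerProductSpace ℝ U] [CompleteSpace U]
    [NormedAddCommGroup V] [InnerProductSpace ℝ V] [CompleteSpace V]
    (b : U →ₗ[ℝ] V →ₗ[ℝ] ℝ) (C₁ C₂ Cpi : ℝ)
    (hC₁ : 0 < C₁) (hC₂ : 0 ≤ C₂) (hCpi : 0 < Cpi)
    -- (A1)
    (hA1 : ∀ w : U, (∀ v : V, b w v = 0) → w = 0)
    -- (A2)
    (hA2 : ∀ v : V, C₁ * ‖v‖ ≤ ⨆ w : {w : U // w ≠ 0}, b w.1 v / ‖w.1‖)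
    -- continuity bound
    (hb : ∀ (w : U) (v : V), b w v ≤ C₂ * ‖w‖ * ‖v‖)
    -- discrete spaces
    (Uh : Submodule ℝ U) (Vr : Submodule ℝ V)
    [FiniteDimensional ℝ Uh] [FiniteDimensional ℝ Vr]
    -- trial-to-test operator
    (T : U →ₗ[ℝ] V) (hTmem : ∀ w : U, T w ∈ Vr)
    (hT : ∀ w : U, ∀ v ∈ Vr, ⟪T w, v⟫_ℝ = b w v)
    -- Fortin operator
    (Pi : V →ₗ[ℝ] V) (hPimem : ∀ v : V, Pi v ∈ Vr)
    (hPi : ∀ w ∈ Uh, ∀ v : V, b w (v - Pi v) = 0)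
    (hPin : ∀ v : V, ‖Pi v‖ ≤ Cpi * ‖v‖)
    (l : V →L[ℝ] ℝ) :
    ∃! u : Uh, ∀ v ∈ Submodule.map T Uh, b (u : U) v = l v := by

  classical
  -- injectivity of T on Uh
  have hinj : ∀ u ∈ Uh, T u = 0 → u = 0 := by
    intro u hu hTu
    apply hA1
    intro v
    have h1 := hPi u hu v
    have h2 : (⟪T u, Pi v⟫_ℝ) = b u (Pi v) := hT u (Pi v) (hPimem v)
    have h3 : b u v = b u (v - Pi v) + b u (Pi v) := by
      rw [← map_add]
      congr 1
      abel
    rw [h3, h1, ← h2, hTu, inner_zero_left]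
    ring
  set W := Submodule.map T Uh with hWdef
  have hWle : W ≤ Vr := by
    rintro v ⟨w, hw, rfl⟩
    exact hTmem w
  haveI : FiniteDimensional ℝ W := Module.Finite.map Uh T
  haveI : CompleteSpace W := FiniteDimensional.complete ℝ W
  -- Riesz representative of l on W
  set g : W →L[ℝ] ℝ := l.comp (Submodule.subtypeL W) with hgdef
  set z : W := (InnerProductSpace.toDual ℝ W).symm g with hzdef
  have hz : ∀ v : W, ⟪z, v⟫_ℝ = l (v : V) := by
    intro v
    have := InnerProductSpace.toDual_symm_apply (E := W) (𝕜 := ℝ) (y := g) (x := v)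
    simpa [hzdef, hgdef] using this
  obtain ⟨u, hu, hTu⟩ := z.2
  refine ⟨⟨u, hu⟩, ?_, ?_⟩
  · intro v hv
    have h1 : b u v = ⟪T u, v⟫_ℝ := (hT u v (hWle hv)).symm
    have h2 : (⟪T u, v⟫_ℝ) = ⟪z, (⟨v, hv⟩ : W)⟫_ℝ := by
      rw [Submodule.coe_inner, hTu]
    rw [h1, h2, hz]
  · rintro ⟨y, hy⟩ hby
    have hzero : y - u = 0 := by
      have hmem : T (y - u) ∈ W := by
        rw [map_sub]
        exact Submodule.sub_mem W ⟨y, hy, rfl⟩ ⟨u, hu, rfl⟩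
      have hb0 : ∀ v ∈ W, b (y - u) v = 0 := by
        intro v hv
        have hyv := hby v hv
        have huv : b u v = l v := by
          have h1 : b u v = ⟪T u, v⟫_ℝ := (hT u v (hWle hv)).symm
          have h2 : (⟪T u, v⟫_ℝ) = ⟪z, (⟨v, hv⟩ : W)⟫_ℝ := by
            rw [Submodule.coe_inner, hTu]
          rw [h1, h2, hz]
        have : b (y - u) v = b y v - b u v := by
          rw [map_sub]; rfl
        rw [this, hyv, huv, sub_self]
      have hT0 : T (y - u) = 0 := by
        have := hb0 (T (y - u)) hmem
        rw [← hT (y - u) (T (y - u)) (hWle hmem)] at this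
        exact inner_self_eq_zero.mp this
      exact hinj (y - u) (Submodule.sub_mem Uh hy hu) hT0
    ext
    simpa [sub_eq_zero] using hzero
end

section
/- Suppose assumptions (A1) and (A2) hold, the continuity bound b(w,v) ≤ C₂‖w‖_U‖v‖_V holds, and a Fortin operator Π with constant C_Π > 0 exists. Let n = dim U_h, let ℬ₁,…,ℬₙ be a basis of U_h, and define the stiffness matrix S ∈ ℝ^{n×n} by S_{ij} = (Tʳℬ_j, Tʳℬ_i)_V. Then S is symmetric and positive definite. -/
open scoped InnerProductSpace

/-- The DPG stiffness matrix `S_{ij} = (Tʳℬ_j, Tʳℬ_i)_V` is symmetric positive definite. -/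
theorem dpg_stiffness_posdef
    {U V : Type*} [NormedAddCommGroup U] [InnerProductSpace ℝ U] [CompleteSpace U]
    [NormedAddCommGroup V] [InnerProductSpace ℝ V] [CompleteSpace V]
    (b : U →ₗ[ℝ] V →ₗ[ℝ] ℝ) (C₁ C₂ Cpi : ℝ)
    (hC₁ : 0 < C₁) (hC₂ : 0 ≤ C₂) (hCpi : 0 < Cpi)
    -- (A1)
    (hA1 : ∀ w : U, (∀ v : V, b w v = 0) → w = 0)
    -- (A2)
    (hA2 : ∀ v : V, C₁ * ‖v‖ ≤ ⨆ w : {w : U // w ≠ 0}, b w.1 v / ‖w.1‖)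
    -- continuity bound
    (hb : ∀ (w : U) (v : V), b w v ≤ C₂ * ‖w‖ * ‖v‖)
    -- discrete spaces
    (Uh : Submodule ℝ U) (Vr : Submodule ℝ V)
    [FiniteDimensional ℝ Uh] [FiniteDimensional ℝ Vr]
    -- trial-to-test operator
    (T : U →ₗ[ℝ] V) (hTmem : ∀ w : U, T w ∈ Vr)
    (hT : ∀ w : U, ∀ v ∈ Vr, ⟪T w, v⟫_ℝ = b w v)
    -- Fortin operator
    (Pi : V →ₗ[ℝ] V) (hPimem : ∀ v : V, Pi v ∈ Vr)
    (hPi : ∀ w ∈ Uh, ∀ v : V, b w (v - Pi v) = 0)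
    (hPin : ∀ v : V, ‖Pi v‖ ≤ Cpi * ‖v‖)
    -- basis and stiffness matrix
    (n : ℕ) (hn : n = Module.finrank ℝ Uh)
    (ℬ : Module.Basis (Fin n) ℝ Uh)
    (S : Matrix (Fin n) (Fin n) ℝ)
    (hS : ∀ i j, S i j = ⟪T (ℬ j : U), T (ℬ i : U)⟫_ℝ) :
    S.IsSymm ∧ S.PosDef := by
  have hsymm : S.IsSymm := by
    ext i j
    rw [Matrix.transpose_apply, hS, hS, real_inner_comm]
  refine ⟨hsymm, Matrix.PosDef.of_dotProduct_mulVec_pos ?_ ?_⟩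
  · ext i j
    simp [Matrix.conjTranspose_apply, hS, real_inner_comm]
  · intro x hx
    set w : Uh := ∑ j, x j • ℬ j with hw
    have hwU : (w : U) = ∑ j, x j • ((ℬ j : U)) := by
      simp [hw]
    have hwne : w ≠ 0 := by
      intro h0
      apply hx
      have h1 : ℬ.equivFun.symm x = ℬ.equivFun.symm 0 := by
        rw [Module.Basis.equivFun_symm_apply, map_zero]; exact h0
      exact ℬ.equivFun.symm.injective h1
    -- key: T w ≠ 0
    have hTw : T (w : U) ≠ 0 := by
      intro hT0
      apply hwne
      have : (w : U) = 0 := by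
        apply hA1
        intro v
        have h1 : b (w : U) (v - Pi v) = 0 := hPi _ w.2 v
        have h2 : b (w : U) (Pi v) = 0 := by
          rw [← hT _ _ (hPimem v), hT0, inner_zero_left]
        have := (b (w : U)).map_sub v (Pi v)
        have hv : b (w : U) v = b (w : U) (Pi v) + b (w : U) (v - Pi v) := by
          rw [this]; ring
        rw [hv, h1, h2, add_zero]
      exact Subtype.ext this
    have key : dotProduct (star x) (S.mulVec x) = ⟪T (w : U), T (w : U)⟫_ℝ := by
      rw [hwU]
      simp only [map_sum, map_smul, sum_inner, inner_sum, real_inner_smul_left,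
        real_inner_smul_right, dotProduct, Matrix.mulVec, hS,
        star_trivial, Finset.mul_sum]
      rw [Finset.sum_comm]
      congr 1; ext i; congr 1; ext j; rw [real_inner_comm]; ring
    rw [key]
    have : 0 < ‖T (w : U)‖ := norm_pos_iff.mpr hTw
    rw [real_inner_self_eq_norm_sq]
    positivity
end

section
/- Suppose assumptions (A1) and (A2) hold, the continuity bound b(w,v) ≤ C₂‖w‖_U‖v‖_V holds, and a Fortin operator Π with constant C_Π > 0 exists. Let n = dim U_h, let ℬ₁,…,ℬₙ be a basis of U_h, let S ∈ ℝ^{n×n} be the stiffness matrix S_{ij} = (Tʳℬ_j, Tʳℬ_i)_V, and suppose λ₀, λ₁ > 0 satisfy λ₀‖x‖²_{ℓ²} ≤ ‖Σᵢ xᵢℬᵢ‖²_U ≤ λ₁‖x‖²_{ℓ²} for all x ∈ ℝⁿ. Then the Rayleigh quotient bounds (C₁²λ₀/C_Π²)‖x‖²_{ℓ²} ≤ xᵀSx ≤ C₂²λ₁‖x‖²_{ℓ²} hold for all x ∈ ℝⁿ. -/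
open scoped InnerProductSpace

/-- Riesz representation of the adjoint of `b`: an operator `A : V →L[ℝ] U`
with `⟪A v, u⟫ = b u v`. -/
theorem dpg_exists_adjoint
    {U V : Type*} [NormedAddCommGroup U] [InnerProductSpace ℝ U] [CompleteSpace U]
    [NormedAddCommGroup V] [InnerProductSpace ℝ V]
    (b : U →ₗ[ℝ] V →ₗ[ℝ] ℝ) (C₂ : ℝ) (hC₂ : 0 ≤ C₂)
    (hb : ∀ (w : U) (v : V), b w v ≤ C₂ * ‖w‖ * ‖v‖) :
    ∃ A : V →L[ℝ] U, ∀ (u : U) (v : V), ⟪A v, u⟫_ℝ = b u v := by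
  have habs : ∀ (w : U) (v : V), |b w v| ≤ C₂ * ‖v‖ * ‖w‖ := by
    intro w v
    rw [abs_le]
    constructor
    · have := hb (-w) v
      simp only [map_neg, LinearMap.neg_apply, norm_neg] at this
      linarith [this]
    · have := hb w v
      linarith [this]
  have key : ∀ v : V, ∃ a : U, ∀ u : U, ⟪a, u⟫_ℝ = b u v := by
    intro v
    set g : U →L[ℝ] ℝ := LinearMap.mkContinuous (b.flip v) (C₂ * ‖v‖)
      (fun u => by simpa using habs u v) with hg
    refine ⟨(InnerProductSpace.toDual ℝ U).symm g, fun u => ?_⟩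
    rw [InnerProductSpace.toDual_symm_apply]
    simp [hg]
  choose a ha using key
  have hmapadd : ∀ v₁ v₂ : V, a (v₁ + v₂) = a v₁ + a v₂ := by
    intro v₁ v₂
    apply ext_inner_right ℝ
    intro u
    rw [ha, inner_add_left, ha, ha, map_add]
  have hmapsmul : ∀ (c : ℝ) (v : V), a (c • v) = c • a v := by
    intro c v
    apply ext_inner_right ℝ
    intro u
    rw [ha, real_inner_smul_left, ha, map_smul]
    rfl
  have hbound : ∀ v : V, ‖a v‖ ≤ C₂ * ‖v‖ := by
    intro v
    by_cases h : a v = 0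
    · simp [h]; positivity
    · have h1 : ‖a v‖ ^ 2 = b (a v) v := by
        rw [← ha v (a v)]; exact (real_inner_self_eq_norm_sq (a v)).symm
      have h2 := hb (a v) v
      have hpos : 0 < ‖a v‖ := norm_pos_iff.mpr h
      nlinarith
  exact ⟨LinearMap.mkContinuous ⟨⟨a, hmapadd⟩, hmapsmul⟩ C₂
    (fun v => by simpa [mul_comm] using hbound v),
    fun u v => ha v u⟩

/-- Rayleigh-quotient bounds for the DPG stiffness matrix:
`(C₁²λ₀/C_Π²)‖x‖² ≤ xᵀSx ≤ C₂²λ₁‖x‖²`. -/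
theorem dpg_stiffness_rayleigh_bounds
    {U V : Type*} [NormedAddCommGroup U] [InnerProductSpace ℝ U] [CompleteSpace U]
    [NormedAddCommGroup V] [InnerProductSpace ℝ V] [CompleteSpace V]
    (b : U →ₗ[ℝ] V →ₗ[ℝ] ℝ) (C₁ C₂ Cpi : ℝ)
    (hC₁ : 0 < C₁) (hC₂ : 0 ≤ C₂) (hCpi : 0 < Cpi)
    -- (A1)
    (hA1 : ∀ w : U, (∀ v : V, b w v = 0) → w = 0)
    -- (A2)
    (hA2 : ∀ v : V, C₁ * ‖v‖ ≤ ⨆ w : {w : U // w ≠ 0}, b w.1 v / ‖w.1‖)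
    -- continuity bound
    (hb : ∀ (w : U) (v : V), b w v ≤ C₂ * ‖w‖ * ‖v‖)
    -- discrete spaces
    (Uh : Submodule ℝ U) (Vr : Submodule ℝ V)
    [FiniteDimensional ℝ Uh] [FiniteDimensional ℝ Vr]
    -- trial-to-test operator
    (T : U →ₗ[ℝ] V) (hTmem : ∀ w : U, T w ∈ Vr)
    (hT : ∀ w : U, ∀ v ∈ Vr, ⟪T w, v⟫_ℝ = b w v)
    -- Fortin operator
    (Pi : V →ₗ[ℝ] V) (hPimem : ∀ v : V, Pi v ∈ Vr)
    (hPi : ∀ w ∈ Uh, ∀ v : V, b w (v - Pi v) = 0)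
    (hPin : ∀ v : V, ‖Pi v‖ ≤ Cpi * ‖v‖)
    -- basis and stiffness matrix
    (n : ℕ) (hn : n = Module.finrank ℝ Uh)
    (ℬ : Module.Basis (Fin n) ℝ Uh)
    (S : Matrix (Fin n) (Fin n) ℝ)
    (hS : ∀ i j, S i j = ⟪T (ℬ j : U), T (ℬ i : U)⟫_ℝ)
    -- the ℓ² norm equivalence constants
    (lam₀ lam₁ : ℝ) (hlam₀ : 0 < lam₀) (hlam₁ : 0 < lam₁)
    (hlam : ∀ x : EuclideanSpace ℝ (Fin n),
      lam₀ * ‖x‖ ^ 2 ≤ ‖∑ i, x i • (ℬ i : U)‖ ^ 2 ∧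
      ‖∑ i, x i • (ℬ i : U)‖ ^ 2 ≤ lam₁ * ‖x‖ ^ 2) :
    ∀ x : EuclideanSpace ℝ (Fin n),
      C₁ ^ 2 * lam₀ / Cpi ^ 2 * ‖x‖ ^ 2 ≤ ∑ i, ∑ j, x i * S i j * x j ∧
      ∑ i, ∑ j, x i * S i j * x j ≤ C₂ ^ 2 * lam₁ * ‖x‖ ^ 2 := by
  obtain ⟨A, hA⟩ := dpg_exists_adjoint b C₂ hC₂ hb
  -- A is bounded below
  have hAlow : ∀ v : V, C₁ * ‖v‖ ≤ ‖A v‖ := by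
    intro v
    refine (hA2 v).trans (Real.iSup_le (fun w => ?_) (norm_nonneg _))
    rw [← hA w.1 v, div_le_iff₀ (norm_pos_iff.mpr w.2)]
    exact real_inner_le_norm _ _
  -- A is surjective
  have hsurj : ∀ u : U, ∃ v : V, A v = u := by
    have hanti : AntilipschitzWith (⟨C₁, hC₁.le⟩ : NNReal)⁻¹ A := by
      apply AddMonoidHomClass.antilipschitz_of_bound
      intro v
      change ‖v‖ ≤ C₁⁻¹ * ‖A v‖
      rw [← div_eq_inv_mul]
      rw [le_div_iff₀ hC₁]
      nlinarith [hAlow v]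
    have hclosed : IsClosed ((LinearMap.range (A : V →ₗ[ℝ] U) : Submodule ℝ U) : Set U) := by
      rw [LinearMap.coe_range]
      exact hanti.isClosed_range A.uniformContinuous
    have : CompleteSpace (LinearMap.range (A : V →ₗ[ℝ] U) : Submodule ℝ U) :=
      hclosed.completeSpace_coe
    have horth : (LinearMap.range (A : V →ₗ[ℝ] U) : Submodule ℝ U)ᗮ = ⊥ := by
      rw [Submodule.eq_bot_iff]
      intro u hu
      apply hA1
      intro v
      rw [← hA u v]
      exact (Submodule.mem_orthogonal _ u).mp hu (A v) ⟨v, rfl⟩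
    have htop : (LinearMap.range (A : V →ₗ[ℝ] U) : Submodule ℝ U) = ⊤ :=
      Submodule.orthogonal_eq_bot_iff.mp horth
    intro u
    have : u ∈ LinearMap.range (A : V →ₗ[ℝ] U) := htop ▸ Submodule.mem_top
    exact this
  -- discrete inf-sup: C₁‖w‖ ≤ Cpi‖Tw‖ for w ∈ Uh
  have hlow : ∀ w ∈ Uh, C₁ * ‖w‖ ≤ Cpi * ‖T w‖ := by
    intro w hw
    by_cases hw0 : w = 0
    · simp only [hw0, norm_zero, mul_zero, map_zero]
      positivity
    obtain ⟨v, hv⟩ := hsurj w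
    have h1 : b w v = ‖w‖ ^ 2 := by
      rw [← hA w v, hv]
      exact real_inner_self_eq_norm_sq w
    have h2 : b w v = b w (Pi v) := by
      have := hPi w hw v
      rw [map_sub] at this
      linarith
    have h3 : b w (Pi v) = ⟪T w, Pi v⟫_ℝ := (hT w (Pi v) (hPimem v)).symm
    have h4 : ⟪T w, Pi v⟫_ℝ ≤ ‖T w‖ * (Cpi * ‖v‖) :=
      (real_inner_le_norm _ _).trans
        (mul_le_mul_of_nonneg_left (hPin v) (norm_nonneg _))
    have h5 : C₁ * ‖v‖ ≤ ‖w‖ := by rw [← hv]; exact hAlow v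
    have hwpos : 0 < ‖w‖ := norm_pos_iff.mpr hw0
    have hTn : 0 ≤ ‖T w‖ := norm_nonneg _
    have hvn : 0 ≤ ‖v‖ := norm_nonneg _
    -- ‖w‖² ≤ ‖Tw‖ * Cpi * ‖v‖  and  C₁‖v‖ ≤ ‖w‖
    nlinarith [mul_le_mul_of_nonneg_left h5 (mul_nonneg hCpi.le hTn)]
  -- continuity of T: ‖Tw‖ ≤ C₂‖w‖
  have hupp : ∀ w : U, ‖T w‖ ≤ C₂ * ‖w‖ := by
    intro w
    by_cases h : T w = 0
    · simp [h]; positivity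
    have h1 : ‖T w‖ ^ 2 = b w (T w) := by
      rw [← hT w (T w) (hTmem w)]
      exact (real_inner_self_eq_norm_sq (T w)).symm
    have h2 := hb w (T w)
    have hpos : 0 < ‖T w‖ := norm_pos_iff.mpr h
    nlinarith
  intro x
  set w : U := ∑ i, x i • (ℬ i : U) with hwdef
  have hwmem : w ∈ Uh := Submodule.sum_mem _ fun i _ => Submodule.smul_mem _ _ (ℬ i).2
  have hquad : ∑ i, ∑ j, x i * S i j * x j = ‖T w‖ ^ 2 := by
    have hTw : T w = ∑ i, x i • T (ℬ i : U) := by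
      rw [hwdef, map_sum]
      simp [map_smul]
    rw [← real_inner_self_eq_norm_sq, hTw, sum_inner]
    refine Finset.sum_congr rfl fun i _ => ?_
    rw [real_inner_smul_left, inner_sum, Finset.mul_sum]
    refine Finset.sum_congr rfl fun j _ => ?_
    rw [hS i j, real_inner_smul_right, real_inner_comm]
    ring
  rw [hquad]
  obtain ⟨hl0, hl1⟩ := hlam x
  rw [← hwdef] at hl0 hl1
  constructor
  · have h1 : C₁ * ‖w‖ ≤ Cpi * ‖T w‖ := hlow w hwmem
    have h2 : (C₁ * ‖w‖) ^ 2 ≤ (Cpi * ‖T w‖) ^ 2 := by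
      apply sq_le_sq'
      · nlinarith [norm_nonneg w, norm_nonneg (T w)]
      · exact h1
    rw [div_mul_eq_mul_div, div_le_iff₀ (by positivity : (0:ℝ) < Cpi ^ 2)]
    nlinarith [norm_nonneg w, norm_nonneg (T w)]
  · have h1 : ‖T w‖ ^ 2 ≤ (C₂ * ‖w‖) ^ 2 := by
      apply sq_le_sq'
      · nlinarith [norm_nonneg (T w), norm_nonneg w, hupp w]
      · exact hupp w
    nlinarith [norm_nonneg w, norm_nonneg x]
end

section
/- Suppose assumptions (A1) and (A2) hold, the continuity bound b(w,v) ≤ C₂‖w‖_U‖v‖_V holds, and a Fortin operator Π with constant C_Π > 0 exists. Let n = dim U_h, let ℬ₁,…,ℬₙ be a basis of U_h, let S ∈ ℝ^{n×n} be the stiffness matrix S_{ij} = (Tʳℬ_j, Tʳℬ_i)_V, and suppose λ₀, λ₁ > 0 satisfy λ₀‖x‖²_{ℓ²} ≤ ‖Σᵢ xᵢℬᵢ‖²_U ≤ λ₁‖x‖²_{ℓ²} for all x ∈ ℝⁿ. Then every eigenvalue μ of the symmetric matrix S satisfies C₁²λ₀/C_Π² ≤ μ ≤ C₂²λ₁;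 consequently the spectral condition number κ(S), i.e. the ratio of the largest to the smallest eigenvalue of S, satisfies κ(S) ≤ (λ₁/λ₀)·(C₂²C_Π²/C₁²). -/
open scoped InnerProductSpace
open scoped NNReal

set_option maxHeartbeats 1000000

/-- Eigenvalue bounds and condition number bound for the DPG stiffness matrix:
every eigenvalue `μ` of `S` satisfies `C₁²λ₀/C_Π² ≤ μ ≤ C₂²λ₁`, and hence the ratio of any
two eigenvalues (in particular the spectral condition number `κ(S)`, the ratio of the largest
to the smallest eigenvalue) is at most `(λ₁/λ₀)·(C₂²C_Π²/C₁²)`. -/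
theorem dpg_stiffness_condition_number
    {U V : Type*} [NormedAddCommGroup U] [InnerProductSpace ℝ U] [CompleteSpace U]
    [NormedAddCommGroup V] [InnerProductSpace ℝ V] [CompleteSpace V]
    (b : U →ₗ[ℝ] V →ₗ[ℝ] ℝ) (C₁ C₂ Cpi : ℝ)
    (hC₁ : 0 < C₁) (hC₂ : 0 ≤ C₂) (hCpi : 0 < Cpi)
    -- (A1)
    (hA1 : ∀ w : U, (∀ v : V, b w v = 0) → w = 0)
    -- (A2)
    (hA2 : ∀ v : V, C₁ * ‖v‖ ≤ ⨆ w : {w : U // w ≠ 0}, b w.1 v / ‖w.1‖)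
    -- continuity bound
    (hb : ∀ (w : U) (v : V), b w v ≤ C₂ * ‖w‖ * ‖v‖)
    -- discrete spaces
    (Uh : Submodule ℝ U) (Vr : Submodule ℝ V)
    [FiniteDimensional ℝ Uh] [FiniteDimensional ℝ Vr]
    -- trial-to-test operator
    (T : U →ₗ[ℝ] V) (hTmem : ∀ w : U, T w ∈ Vr)
    (hT : ∀ w : U, ∀ v ∈ Vr, ⟪T w, v⟫_ℝ = b w v)
    -- Fortin operator
    (Pi : V →ₗ[ℝ] V) (hPimem : ∀ v : V, Pi v ∈ Vr)
    (hPi : ∀ w ∈ Uh, ∀ v : V, b w (v - Pi v) = 0)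
    (hPin : ∀ v : V, ‖Pi v‖ ≤ Cpi * ‖v‖)
    -- basis and stiffness matrix
    (n : ℕ) (hn : n = Module.finrank ℝ Uh)
    (ℬ : Module.Basis (Fin n) ℝ Uh)
    (S : Matrix (Fin n) (Fin n) ℝ)
    (hS : ∀ i j, S i j = ⟪T (ℬ j : U), T (ℬ i : U)⟫_ℝ)
    -- the ℓ² norm equivalence constants
    (lam₀ lam₁ : ℝ) (hlam₀ : 0 < lam₀) (hlam₁ : 0 < lam₁)
    (hlam : ∀ x : EuclideanSpace ℝ (Fin n),
      lam₀ * ‖x‖ ^ 2 ≤ ‖∑ i, x i • (ℬ i : U)‖ ^ 2 ∧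
      ‖∑ i, x i • (ℬ i : U)‖ ^ 2 ≤ lam₁ * ‖x‖ ^ 2) :
    (∀ (μ : ℝ) (x : Fin n → ℝ), x ≠ 0 → S.mulVec x = μ • x →
        C₁ ^ 2 * lam₀ / Cpi ^ 2 ≤ μ ∧ μ ≤ C₂ ^ 2 * lam₁) ∧
    ∀ (μ₁ μ₂ : ℝ) (x₁ x₂ : Fin n → ℝ), x₁ ≠ 0 → x₂ ≠ 0 →
        S.mulVec x₁ = μ₁ • x₁ → S.mulVec x₂ = μ₂ • x₂ →
        μ₁ / μ₂ ≤ lam₁ / lam₀ * (C₂ ^ 2 * Cpi ^ 2 / C₁ ^ 2) := by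
  -- the Riesz representation operator of b
  have habs : ∀ (v : V) (w : U), ‖b.flip v w‖ ≤ C₂ * ‖v‖ * ‖w‖ := by
    intro v w
    have h1 := hb w v
    have h2 := hb (-w) v
    simp only [map_neg, LinearMap.neg_apply, norm_neg] at h2
    rw [Real.norm_eq_abs, abs_le]
    constructor <;> simp only [LinearMap.flip_apply] <;> nlinarith
  let B : V →L[ℝ] U →L[ℝ] ℝ := LinearMap.mkContinuous₂ b.flip C₂ habs
  let A₀ : V →ₗ[ℝ] U :=
    { toFun := fun v => (InnerProductSpace.toDual ℝ U).symm (B v)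
      map_add' := by intro v₁ v₂; simp
      map_smul' := by intro c v; simp }
  let A : V →L[ℝ] U := A₀.mkContinuous C₂ (by
    intro v
    have h1 : ‖A₀ v‖ = ‖B v‖ := (InnerProductSpace.toDual ℝ U).symm.norm_map _
    have h2 : ‖B‖ ≤ C₂ := LinearMap.mkContinuous₂_norm_le _ hC₂ _
    calc ‖A₀ v‖ = ‖B v‖ := h1
      _ ≤ ‖B‖ * ‖v‖ := B.le_opNorm v
      _ ≤ C₂ * ‖v‖ := by gcongr)
  have hA : ∀ (v : V) (w : U), ⟪A v, w⟫_ℝ = b w v := by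
    intro v w
    show ⟪(InnerProductSpace.toDual ℝ U).symm (B v), w⟫_ℝ = b w v
    rw [InnerProductSpace.toDual_symm_apply]
    rfl
  -- A is bounded below
  have hAlow : ∀ v : V, C₁ * ‖v‖ ≤ ‖A v‖ := by
    intro v
    rcases isEmpty_or_nonempty {w : U // w ≠ 0} with hempty | hne
    · have h0 : (⨆ w : {w : U // w ≠ 0}, b w.1 v / ‖w.1‖) = 0 := by
        rw [iSup_of_empty']
        exact Real.sSup_empty
      have := hA2 v
      rw [h0] at this
      have hv : ‖v‖ = 0 := le_antisymm (by nlinarith) (norm_nonneg v)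
      rw [hv, mul_zero]
      exact norm_nonneg _
    · refine (hA2 v).trans (ciSup_le fun w => ?_)
      have hpos : 0 < ‖(w : U)‖ := norm_pos_iff.mpr w.2
      rw [div_le_iff₀ hpos, ← hA v w]
      exact real_inner_le_norm _ _
  -- A is surjective
  have hsurj : ∀ u : U, ∃ v : V, A v = u := by
    have hanti : AntilipschitzWith (Real.toNNReal C₁)⁻¹ A := by
      apply A.antilipschitz_of_bound
      intro v
      have h := hAlow v
      have hc : (((Real.toNNReal C₁)⁻¹ : ℝ≥0) : ℝ) = C₁⁻¹ := by
        rw [NNReal.coe_inv, Real.coe_toNNReal _ hC₁.le]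
      rw [hc, ← div_eq_inv_mul, le_div_iff₀ hC₁]
      linarith
    have hclosed : IsClosed (Set.range A) := hanti.isClosed_range A.uniformContinuous
    have hrange : LinearMap.range (A : V →ₗ[ℝ] U) = ⊤ := by
      have hcl : IsClosed ((LinearMap.range (A : V →ₗ[ℝ] U) : Submodule ℝ U) : Set U) := by
        simpa [LinearMap.coe_range] using hclosed
      haveI : CompleteSpace (LinearMap.range (A : V →ₗ[ℝ] U)) := hcl.completeSpace_coe
      rw [← Submodule.orthogonal_eq_bot_iff]
      rw [Submodule.eq_bot_iff]
      intro w hw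
      apply hA1
      intro v
      rw [← hA v w]
      exact hw (A v) ⟨v, rfl⟩
    intro u
    have : u ∈ LinearMap.range (A : V →ₗ[ℝ] U) := hrange ▸ Submodule.mem_top
    exact this
  -- discrete inf-sup via the Fortin operator
  have hlow : ∀ w : U, w ∈ Uh → C₁ * ‖w‖ ≤ Cpi * ‖T w‖ := by
    intro w hw
    obtain ⟨v, hv⟩ := hsurj w
    have hbv : b w v = ‖w‖ ^ 2 := by
      rw [← hA v w, hv, real_inner_self_eq_norm_sq]
    have hvle : C₁ * ‖v‖ ≤ ‖w‖ := by rw [← hv]; exact hAlow v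
    have hPiv : b w v = b w (Pi v) := by
      have := hPi w hw v
      simp only [map_sub] at this
      linarith
    have hTP : b w (Pi v) = ⟪T w, Pi v⟫_ℝ := (hT w (Pi v) (hPimem v)).symm
    have hbnd : b w (Pi v) ≤ ‖T w‖ * (Cpi * ‖v‖) := by
      rw [hTP]
      calc ⟪T w, Pi v⟫_ℝ ≤ ‖T w‖ * ‖Pi v‖ := real_inner_le_norm _ _
        _ ≤ ‖T w‖ * (Cpi * ‖v‖) := by
            have := hPin v
            have h0 : (0:ℝ) ≤ ‖T w‖ := norm_nonneg _
            nlinarith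
    have hkey : ‖w‖ ^ 2 ≤ ‖T w‖ * (Cpi * ‖v‖) := by rw [← hbv, hPiv]; exact hbnd
    rcases eq_or_lt_of_le (norm_nonneg w) with h0 | h0
    · rw [← h0]
      have : (0:ℝ) ≤ Cpi * ‖T w‖ := by positivity
      linarith
    · have hvn : 0 ≤ ‖v‖ := norm_nonneg v
      have hTn : 0 ≤ ‖T w‖ := norm_nonneg _
      have p1 := mul_le_mul_of_nonneg_left hkey hC₁.le
      have p2 := mul_le_mul_of_nonneg_left hvle
        (mul_nonneg hCpi.le hTn)
      nlinarith [p1, p2, mul_pos h0 h0]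
  -- continuity of T
  have hup : ∀ w : U, ‖T w‖ ≤ C₂ * ‖w‖ := by
    intro w
    have h1 : ‖T w‖ ^ 2 = b w (T w) := by
      rw [← hT w (T w) (hTmem w), real_inner_self_eq_norm_sq]
    have h2 := hb w (T w)
    rcases eq_or_lt_of_le (norm_nonneg (T w)) with h0 | h0
    · rw [← h0]; positivity
    · nlinarith
  -- the quadratic-form identity and eigenvalue bounds
  have hbounds : ∀ (μ : ℝ) (x : Fin n → ℝ), x ≠ 0 → S.mulVec x = μ • x →
      C₁ ^ 2 * lam₀ / Cpi ^ 2 ≤ μ ∧ μ ≤ C₂ ^ 2 * lam₁ := by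
    intro μ x hx hev
    set w : U := ∑ i, x i • (ℬ i : U) with hwdef
    have hwmem : w ∈ Uh := by
      apply Submodule.sum_mem
      intro i _
      exact Submodule.smul_mem _ _ (ℬ i).2
    have hTw : T w = ∑ i, x i • T (ℬ i : U) := by
      rw [hwdef, map_sum]
      simp [map_smul]
    have hquad : ∑ i, x i * (S.mulVec x) i = ⟪T w, T w⟫_ℝ := by
      rw [hTw]
      simp only [Matrix.mulVec, dotProduct, hS, inner_sum, sum_inner,
        real_inner_smul_left, real_inner_smul_right, Finset.mul_sum]
      rw [Finset.sum_comm]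
      apply Finset.sum_congr rfl
      intro i _
      apply Finset.sum_congr rfl
      intro j _
      rw [real_inner_comm]
      ring
    set nx : ℝ := ∑ i, x i ^ 2 with hnxdef
    have hnxpos : 0 < nx := by
      rcases Function.ne_iff.mp hx with ⟨i, hi⟩
      calc (0:ℝ) < x i ^ 2 := pow_two_pos_of_ne_zero hi
        _ ≤ nx := Finset.single_le_sum (f := fun j => x j ^ 2)
            (fun j _ => by positivity) (Finset.mem_univ i)
    have heig : μ * nx = ⟪T w, T w⟫_ℝ := by
      rw [← hquad, hev]
      simp [Pi.smul_apply, smul_eq_mul, Finset.mul_sum, hnxdef]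
      apply Finset.sum_congr rfl
      intro i _
      ring
    have hnxeq : ∀ y : EuclideanSpace ℝ (Fin n), ‖y‖ ^ 2 = ∑ i, y i ^ 2 := by
      intro y
      rw [EuclideanSpace.norm_eq, Real.sq_sqrt (by positivity)]
      simp [Real.norm_eq_abs, sq_abs]
    have hl := hlam (WithLp.toLp 2 x)
    rw [hnxeq] at hl
    have hl0 : lam₀ * nx ≤ ‖w‖ ^ 2 := hl.1
    have hl1 : ‖w‖ ^ 2 ≤ lam₁ * nx := hl.2
    have hTw2 : μ * nx = ‖T w‖ ^ 2 := by rw [heig, real_inner_self_eq_norm_sq]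
    constructor
    · rw [div_le_iff₀ (by positivity)]
      have h1 : C₁ * ‖w‖ ≤ Cpi * ‖T w‖ := hlow w hwmem
      have h2 : (C₁ * ‖w‖) ^ 2 ≤ (Cpi * ‖T w‖) ^ 2 := by
        apply sq_le_sq' <;> nlinarith [norm_nonneg w, norm_nonneg (T w)]
      have h3 : C₁ ^ 2 * (lam₀ * nx) ≤ Cpi ^ 2 * (μ * nx) := by
        rw [hTw2]
        nlinarith [norm_nonneg w]
      nlinarith
    · have h1 : ‖T w‖ ≤ C₂ * ‖w‖ := hup w
      have h2 : ‖T w‖ ^ 2 ≤ C₂ ^ 2 * ‖w‖ ^ 2 := by nlinarith [norm_nonneg (T w), norm_nonneg w]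
      have h3 : μ * nx ≤ C₂ ^ 2 * (lam₁ * nx) := by rw [hTw2]; nlinarith
      nlinarith
  refine ⟨hbounds, ?_⟩
  intro μ₁ μ₂ x₁ x₂ hx₁ hx₂ he₁ he₂
  obtain ⟨hlo₁, hup₁⟩ := hbounds μ₁ x₁ hx₁ he₁
  obtain ⟨hlo₂, hup₂⟩ := hbounds μ₂ x₂ hx₂ he₂
  have hA0 : 0 < C₁ ^ 2 * lam₀ / Cpi ^ 2 := by positivity
  have hμ₂ : 0 < μ₂ := lt_of_lt_of_le hA0 hlo₂
  have hμ₁ : 0 ≤ μ₁ := le_of_lt (lt_of_lt_of_le hA0 hlo₁)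
  have key : μ₁ / μ₂ ≤ (C₂ ^ 2 * lam₁) / (C₁ ^ 2 * lam₀ / Cpi ^ 2) :=
    div_le_div₀ (by positivity) hup₁ hA0 hlo₂
  calc μ₁ / μ₂ ≤ (C₂ ^ 2 * lam₁) / (C₁ ^ 2 * lam₀ / Cpi ^ 2) := key
    _ = lam₁ / lam₀ * (C₂ ^ 2 * Cpi ^ 2 / C₁ ^ 2) := by
        field_simp
end

section
/- Let N ≥ 1 and let r ≥ 0 be integers. If f : ℝᴺ → ℝ is a polynomial function of total degree at most r that vanishes at every point of each facet F₀,…,F_N of the simplex K, then there exists a polynomial function g of total degree at most r − (N+1) (truncated subtraction in ℕ; in particular, if r < N+1 then necessarily f = 0 and g = 0) such that f = (λ₀·λ₁·⋯·λ_N)·g. -/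
open MvPolynomial Pointwise

theorem mv_analytic {n : ℕ} (P : MvPolynomial (Fin n) ℝ) :
    AnalyticOnNhd ℝ (fun x : EuclideanSpace ℝ (Fin n) => MvPolynomial.eval (x : Fin n → ℝ) P) Set.univ := by
  induction P using MvPolynomial.induction_on with
  | C a => simp only [eval_C]; exact analyticOnNhd_const
  | add p q hp hq => simp only [map_add]; exact hp.add hq
  | mul_X p j hp =>
      simp only [map_mul, eval_X]
      exact hp.mul (((ContinuousLinearMap.proj j : (Fin n → ℝ) →L[ℝ] ℝ).comp
        (PiLp.continuousLinearEquiv 2 ℝ (fun _ : Fin n => ℝ)).toContinuousLinearMap).analyticOnNhd _)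

theorem mv_zero_of_interior {n : ℕ} (P : MvPolynomial (Fin n) ℝ)
    {s : Set (EuclideanSpace ℝ (Fin n))} (hs : (interior s).Nonempty)
    (h : ∀ x ∈ s, MvPolynomial.eval (x : Fin n → ℝ) P = 0) : P = 0 := by
  obtain ⟨z, hz⟩ := hs
  have hev : (fun x : EuclideanSpace ℝ (Fin n) => MvPolynomial.eval (x : Fin n → ℝ) P) =ᶠ[nhds z] 0 := by
    filter_upwards [isOpen_interior.mem_nhds hz] with x hx
    exact h x (interior_subset hx)
  have := (mv_analytic P).eqOn_zero_of_preconnected_of_eventuallyEq_zero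
    isPreconnected_univ (Set.mem_univ z) hev
  apply (MvPolynomial.funext_iff (R := ℝ)).2
  intro x
  have hx := this (Set.mem_univ ((WithLp.equiv 2 (Fin n → ℝ)).symm x))
  simpa using hx
open MvPolynomial

variable {σ : Type*} [DecidableEq σ]

noncomputable def Theta {R : Type*} [CommSemiring R] :
    MvPolynomial σ R →ₐ[R] Polynomial (MvPolynomial σ R) :=
  aeval (fun i => Polynomial.C (X i) * Polynomial.X)

theorem Theta_monomial {R : Type*} [CommSemiring R] (m : σ →₀ ℕ) (c : R) :
    Theta (monomial m c) = Polynomial.C (monomial m c) * Polynomial.X ^ (m.sum fun _ e => e) := by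
  rw [monomial_eq]
  rw [map_mul]
  have h1 : (Theta (C c : MvPolynomial σ R)) = Polynomial.C (C c) := by
    simp [Theta]
  rw [h1]
  have h2 : Theta (m.prod fun i e => (X i : MvPolynomial σ R) ^ e)
      = Polynomial.C (m.prod fun i e => (X i : MvPolynomial σ R) ^ e) *
        Polynomial.X ^ (m.sum fun _ e => e) := by
    rw [Finsupp.prod, Finsupp.sum, map_prod, map_prod, ← Finset.prod_pow_eq_pow_sum,
      ← Finset.prod_mul_distrib]
    apply Finset.prod_congr rfl
    intro i _
    simp [Theta, mul_pow]
  rw [h2, map_mul]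
  ring

theorem Theta_coeff {R : Type*} [CommSemiring R] (A : MvPolynomial σ R) (d : ℕ) :
    (Theta A).coeff d
      = ∑ m ∈ A.support.filter (fun m => (m.sum fun _ e => e) = d), monomial m (coeff m A) := by
  conv_lhs => rw [A.as_sum, map_sum]
  rw [Polynomial.finset_sum_coeff, Finset.sum_filter]
  apply Finset.sum_congr rfl
  intro m _
  rw [Theta_monomial, Polynomial.coeff_C_mul, Polynomial.coeff_X_pow]
  by_cases h : (m.sum fun _ e => e) = d
  · simp [h]
  · simp [h, Ne.symm h]

theorem Theta_coeff_totalDegree {R : Type*} [CommSemiring R] {A : MvPolynomial σ R} (hA : A ≠ 0) :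
    (Theta A).coeff A.totalDegree ≠ 0 := by
  obtain ⟨m0, hm0, hsup⟩ := Finset.exists_mem_eq_sup A.support
    (support_nonempty.2 hA) (fun m => m.sum fun _ e => e)
  have key : coeff m0 ((Theta A).coeff A.totalDegree) = coeff m0 A := by
    rw [Theta_coeff, coeff_sum, Finset.sum_eq_single m0]
    · simp
    · intro b hb hne
      rw [coeff_monomial, if_neg hne]
    · intro hnot
      exact absurd (Finset.mem_filter.2 ⟨hm0, by rw [totalDegree, hsup]⟩) hnot
  intro h0
  rw [h0] at key
  exact (mem_support_iff.1 hm0) key.symm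

theorem Theta_natDegree {R : Type*} [CommSemiring R] {A : MvPolynomial σ R} (hA : A ≠ 0) :
    (Theta A).natDegree = A.totalDegree := by
  apply le_antisymm
  · apply Polynomial.natDegree_le_iff_coeff_eq_zero.2
    intro d hd
    rw [Theta_coeff]
    apply Finset.sum_eq_zero
    intro m hm
    rw [Finset.mem_filter] at hm
    exact absurd (hm.2 ▸ le_totalDegree hm.1) (by omega)
  · exact Polynomial.le_natDegree_of_ne_zero (Theta_coeff_totalDegree hA)

theorem totalDegree_mul_eq' {R : Type*} [CommRing R] [IsDomain R] {A B : MvPolynomial σ R}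
    (hA : A ≠ 0) (hB : B ≠ 0) :
    (A * B).totalDegree = A.totalDegree + B.totalDegree := by
  have hA' : Theta A ≠ 0 := fun h => Theta_coeff_totalDegree hA (by rw [h]; simp)
  have hB' : Theta B ≠ 0 := fun h => Theta_coeff_totalDegree hB (by rw [h]; simp)
  have hAB : A * B ≠ 0 := mul_ne_zero hA hB
  rw [← Theta_natDegree hAB, ← Theta_natDegree hA, ← Theta_natDegree hB, map_mul,
    Polynomial.natDegree_mul hA' hB']

theorem exists_decomp {n : ℕ} (k : Fin n) (c : ℝ) (hc : c ≠ 0)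
    (M : MvPolynomial (Fin n) ℝ) (hM : M.degreeOf k = 0) (P : MvPolynomial (Fin n) ℝ) :
    ∃ Q R : MvPolynomial (Fin n) ℝ, P = (C c * X k + M) * Q + R ∧ R.degreeOf k = 0 := by
  set L := C c * X k + M with hL
  induction P using MvPolynomial.induction_on with
  | C a => exact ⟨0, C a, by ring, degreeOf_C _ _⟩
  | add p q hp hq =>
      obtain ⟨Qp, Rp, hp1, hp2⟩ := hp
      obtain ⟨Qq, Rq, hq1, hq2⟩ := hq
      refine ⟨Qp + Qq, Rp + Rq, by rw [hp1, hq1]; ring, ?_⟩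
      have := degreeOf_add_le k Rp Rq
      omega
  | mul_X p j hp =>
      obtain ⟨Q, R, h1, h2⟩ := hp
      by_cases hjk : j = k
      · subst hjk
        refine ⟨Q * X j + C c⁻¹ * R, -(C c⁻¹ * R * M), ?_, ?_⟩
        · rw [h1]
          have : (C c : MvPolynomial (Fin n) ℝ) * C c⁻¹ = 1 := by
            rw [← C_mul, mul_inv_cancel₀ hc, C_1]
          calc (L * Q + R) * X j = L * (Q * X j) + R * X j := by ring
            _ = L * (Q * X j) + C c⁻¹ * R * (C c * X j + M) - C c⁻¹ * R * M := by
                rw [mul_add]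
                rw [show C c⁻¹ * R * (C c * X j) = (C c * C c⁻¹) * R * X j by ring, this]
                ring
            _ = L * (Q * X j + C c⁻¹ * R) + -(C c⁻¹ * R * M) := by rw [← hL]; ring
        · rw [degreeOf_neg]
          have h3 := degreeOf_mul_le j (C c⁻¹ * R) M
          have h4 := degreeOf_mul_le j (C (c⁻¹) : MvPolynomial (Fin n) ℝ) R
          have h5 := degreeOf_C (c⁻¹) j
          omega
      · refine ⟨Q * X j, R * X j, by rw [h1]; ring, ?_⟩
        rw [degreeOf_mul_X_of_ne R (fun h => hjk h.symm), h2]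

theorem eval_indep {n : ℕ} {k : Fin n} {R : MvPolynomial (Fin n) ℝ} (h : R.degreeOf k = 0)
    (x : Fin n → ℝ) (t : ℝ) :
    MvPolynomial.eval (Function.update x k t) R = MvPolynomial.eval x R := by
  rw [eval_eq, eval_eq]
  apply Finset.sum_congr rfl
  intro m hm
  congr 1
  apply Finset.prod_congr rfl
  intro i hi
  have hik : i ≠ k := by
    rintro rfl
    have : m i ≤ 0 := by
      rw [← h, degreeOf_eq_sup]
      exact Finset.le_sup (f := fun m => m i) hm
    exact absurd (Finsupp.mem_support_iff.1 hi) (by omega)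
  rw [Function.update_of_ne hik]

theorem prime_linear {n : ℕ} (k : Fin n) (c : Fin n → ℝ) (d : ℝ) (hck : c k ≠ 0) :
    Prime ((∑ j, C (c j) * X j) + C d : MvPolynomial (Fin n) ℝ) := by
  classical
  set A := ((renameEquiv ℝ (Equiv.optionSubtypeNe k).symm).trans
    (optionEquivLeft ℝ {j : Fin n // j ≠ k})) with hA
  refine (MulEquiv.prime_iff A.toRingEquiv.toMulEquiv).mp ?_
  set W : MvPolynomial {j : Fin n // j ≠ k} ℝ :=
    (∑ j : {j : Fin n // j ≠ k}, C (c j.1) * X j) + C d with hW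
  have hAX : ∀ j : Fin n, A (X j) = if hj : j = k then Polynomial.X
      else Polynomial.C (X ⟨j, hj⟩) := by
    intro j
    by_cases hj : j = k
    · subst hj
      simp only [dif_pos, A, AlgEquiv.trans_apply, renameEquiv_apply, rename_X,
        Equiv.optionSubtypeNe_symm_self, optionEquivLeft_X_none]
    · simp only [dif_neg hj, A, AlgEquiv.trans_apply, renameEquiv_apply, rename_X,
        Equiv.optionSubtypeNe_symm_of_ne hj, optionEquivLeft_X_some]
  have hAC : ∀ r : ℝ, A (C r) = Polynomial.C (C r) := by
    intro r
    simp only [A, AlgEquiv.trans_apply, renameEquiv_apply, rename_C, optionEquivLeft_C]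
  have hAL : A ((∑ j, C (c j) * X j) + C d) = Polynomial.C (C (c k)) * Polynomial.X
      + Polynomial.C W := by
    rw [map_add, map_sum, hAC]
    have hsplit : (∑ j, A (C (c j) * X j))
        = A (C (c k) * X k) + ∑ j : {j : Fin n // j ≠ k}, A (C (c j.1) * X j.1) := by
      rw [← Finset.add_sum_erase _ _ (Finset.mem_univ k)]
      congr 1
      exact (Finset.sum_subtype (p := fun j => j ≠ k) (Finset.univ.erase k)
        (fun j => by simp [Finset.mem_erase]) (fun j => A (C (c j) * X j)))
    rw [hsplit]
    simp only [map_mul, hAC, hAX, eq_self_iff_true, dite_true]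
    have hsum : (∑ x : {j : Fin n // j ≠ k}, Polynomial.C (C (c ↑x)) *
          if hj : ↑x = k then Polynomial.X else Polynomial.C (X ⟨↑x, hj⟩))
        = ∑ x : {j : Fin n // j ≠ k}, Polynomial.C (C (c ↑x) * X x) :=
      Finset.sum_congr rfl (fun x _ => by rw [dif_neg x.2, ← map_mul])
    rw [hsum, hW, map_add, map_sum]
    ring
  show Prime (A ((∑ j, C (c j) * X j) + C d))
  rw [hAL]
  have hu : IsUnit (Polynomial.C (C (c k)) : Polynomial (MvPolynomial {j : Fin n // j ≠ k} ℝ)) :=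
    Polynomial.isUnit_C.2 (IsUnit.of_mul_eq_one _ (by rw [← C_mul, mul_inv_cancel₀ hck, C_1]))
  have key : Polynomial.C (C (c k)) * Polynomial.X + Polynomial.C W
      = Polynomial.C (C (c k)) * (Polynomial.X - Polynomial.C (-(C (c k)⁻¹ * W))) := by
    rw [mul_sub, ← Polynomial.C_mul]
    have h9 : (C (c k) : MvPolynomial {j : Fin n // j ≠ k} ℝ) * -(C (c k)⁻¹ * W) = -W := by
      rw [mul_neg, ← mul_assoc, ← C_mul, mul_inv_cancel₀ hck, C_1, one_mul]
    rw [h9, Polynomial.C_neg, sub_neg_eq_add]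
  rw [key]
  exact (associated_unit_mul_left _ _ hu).symm.prime (Polynomial.prime_X_sub_C _)

theorem prod_dvd_of_primes {α : Type*} [CommMonoidWithZero α] {ι : Type*} [DecidableEq ι]
    (s : Finset ι) (p : ι → α) (n : α)
    (hp : ∀ i ∈ s, Prime (p i)) (hd : ∀ i ∈ s, p i ∣ n)
    (hnd : ∀ i ∈ s, ∀ j ∈ s, i ≠ j → ¬ p i ∣ p j) :
    (∏ i ∈ s, p i) ∣ n := by
  induction s using Finset.induction_on generalizing n with
  | empty => simpa using one_dvd n
  | insert a s' ha ih =>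
      obtain ⟨m, hm⟩ := hd a (Finset.mem_insert_self a s')
      rw [Finset.prod_insert ha, hm]
      apply mul_dvd_mul_left
      apply ih
      · exact fun i hi => hp i (Finset.mem_insert_of_mem hi)
      · intro i hi
        have hdi : p i ∣ p a * m := hm ▸ hd i (Finset.mem_insert_of_mem hi)
        rcases (hp i (Finset.mem_insert_of_mem hi)).2.2 _ _ hdi with h | h
        · exact absurd h (hnd i (Finset.mem_insert_of_mem hi) a (Finset.mem_insert_self a s')
            (fun he => ha (he ▸ hi)))
        · exact h
      · exact fun i hi j hj hij => hnd i (Finset.mem_insert_of_mem hi) j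
          (Finset.mem_insert_of_mem hj) hij

theorem eval_const_of_totalDegree_zero {n : ℕ} {A : MvPolynomial (Fin n) ℝ}
    (h : A.totalDegree = 0) (x y : Fin n → ℝ) :
    MvPolynomial.eval x A = MvPolynomial.eval y A := by
  rw [eval_eq, eval_eq]
  apply Finset.sum_congr rfl
  intro m hm
  have hm0 := (totalDegree_eq_zero_iff _ A).1 h m hm
  have : m = 0 := Finsupp.ext hm0
  subst this
  simp

theorem totalDegree_prod_eq {σ : Type*} [DecidableEq σ] {R : Type*} [CommRing R] [IsDomain R] {ι : Type*}
    [DecidableEq ι] (s : Finset ι) (F : ι → MvPolynomial σ R) (h0 : ∀ i ∈ s, F i ≠ 0) :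
    (∏ i ∈ s, F i).totalDegree = ∑ i ∈ s, (F i).totalDegree := by
  induction s using Finset.induction_on with
  | empty => simp [totalDegree_one]
  | insert a s' ha ih =>
      rw [Finset.prod_insert ha, Finset.sum_insert ha,
        totalDegree_mul_eq' (h0 a (Finset.mem_insert_self a s'))
          (Finset.prod_ne_zero_iff.2 fun i hi => h0 i (Finset.mem_insert_of_mem hi)),
        ih (fun i hi => h0 i (Finset.mem_insert_of_mem hi))]



/-- A polynomial of total degree at most `r` on `ℝᴺ` that vanishes on every facet of a simplex
is divisible by the product of the barycentric coordinate functions: `f = (λ₀⋯λ_N)·g` with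
`deg g ≤ r − (N+1)` (truncated subtraction: in particular if `r < N+1` then `f = 0` and `g = 0`). -/
theorem poly_vanishing_on_facets_factorization
    {N : ℕ} (hN : 1 ≤ N)
    (a : Fin (N + 1) → EuclideanSpace ℝ (Fin N)) (ha : AffineIndependent ℝ a)
    (K : Set (EuclideanSpace ℝ (Fin N))) (hK : K = convexHull ℝ (Set.range a))
    -- barycentric coordinates: the affine functions with `λᵢ(aⱼ) = δᵢⱼ`
    (lam : Fin (N + 1) → (EuclideanSpace ℝ (Fin N) →ᵃ[ℝ] ℝ))
    (hlam : ∀ i j, lam i (a j) = if i = j then (1 : ℝ) else 0)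
    (r : ℕ) (f : EuclideanSpace ℝ (Fin N) → ℝ)
    (P : MvPolynomial (Fin N) ℝ) (hPdeg : P.totalDegree ≤ r)
    (hfP : ∀ x, f x = MvPolynomial.eval (x : Fin N → ℝ) P)
    -- `f` vanishes at every point of each facet `Fᵢ`
    (hvanish : ∀ i : Fin (N + 1), ∀ x ∈ convexHull ℝ (a '' {j | j ≠ i}), f x = 0) :
    ∃ (g : EuclideanSpace ℝ (Fin N) → ℝ) (Q : MvPolynomial (Fin N) ℝ),
      Q.totalDegree ≤ r - (N + 1) ∧
      (∀ x, g x = MvPolynomial.eval (x : Fin N → ℝ) Q) ∧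
      (∀ x, f x = (∏ i, lam i x) * g x) ∧
      (r < N + 1 → (∀ x, f x = 0) ∧ (∀ x, g x = 0)) := by
  classical
  haveI : Nontrivial (Fin (N + 1)) :=
    ⟨⟨0, by omega⟩, ⟨1, by omega⟩, Fin.ne_of_val_ne (by norm_num)⟩
  -- basis vectors
  set ev : Fin N → EuclideanSpace ℝ (Fin N) :=
    fun k => (WithLp.equiv 2 (Fin N → ℝ)).symm (fun m => if k = m then 1 else 0) with hev
  set c : Fin (N + 1) → Fin N → ℝ := fun i j => (lam i).linear (ev j) with hc
  set Λ : Fin (N + 1) → MvPolynomial (Fin N) ℝ :=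
    fun i => (∑ j, C (c i j) * X j) + C (lam i 0) with hΛ
  -- the formula for lam
  have hformula : ∀ (i : Fin (N + 1)) (x : EuclideanSpace ℝ (Fin N)),
      lam i x = (∑ j, (x : Fin N → ℝ) j * c i j) + lam i 0 := by
    intro i x
    have hd : lam i x = (lam i).linear x + lam i 0 := by
      rw [AffineMap.decomp (lam i)]; simp
    rw [hd]
    congr 1
    have := LinearMap.pi_apply_eq_sum_univ
      ((lam i).linear.comp (WithLp.linearEquiv 2 ℝ (Fin N → ℝ)).symm.toLinearMap)
      (x : Fin N → ℝ)
    simpa [smul_eq_mul, hc, hev] using this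
  have hΛeval : ∀ (i : Fin (N + 1)) (x : EuclideanSpace ℝ (Fin N)),
      MvPolynomial.eval (x : Fin N → ℝ) (Λ i) = lam i x := by
    intro i x
    rw [hformula i x, hΛ]
    simp only [map_add, map_sum, map_mul, eval_C, eval_X]
    congr 1
    exact Finset.sum_congr rfl fun j _ => mul_comm _ _
  have hPz : ∀ i, ∀ x ∈ convexHull ℝ (a '' {j | j ≠ i}),
      MvPolynomial.eval (x : Fin N → ℝ) P = 0 := by
    intro i x hx
    rw [← hfP x]
    exact hvanish i x hx
  have hlamz : ∀ i, ∀ x ∈ convexHull ℝ (a '' {j | j ≠ i}), lam i x = 0 := by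
    intro i
    have hconv : Convex ℝ ((lam i) ⁻¹' {0}) :=
      (convex_singleton (0 : ℝ)).affine_preimage (lam i)
    have hsub : a '' {j | j ≠ i} ⊆ (lam i) ⁻¹' {0} := by
      rintro _ ⟨j, hj, rfl⟩
      have hji : ¬ i = j := fun h => hj h.symm
      have : lam i (a j) = 0 := by rw [hlam i j, if_neg hji]
      simpa using this
    exact fun x hx => convexHull_min hsub hconv hx
  -- some coefficient is nonzero
  have hck : ∀ i, ∃ k, c i k ≠ 0 := by
    intro i
    by_contra h
    push_neg at h
    obtain ⟨j0, hj0⟩ := exists_ne i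
    have e1 := hformula i (a i)
    have e2 := hformula i (a j0)
    simp only [h, mul_zero, Finset.sum_const_zero, zero_add] at e1 e2
    have h1 := e1.trans e2.symm
    rw [hlam i i, hlam i j0, if_pos rfl, if_neg (fun hh => hj0 hh.symm)] at h1
    exact one_ne_zero h1
  -- value of lam i at translated point
  have hbval : ∀ (i : Fin (N + 1)) (j0 : Fin (N + 1)) (k : Fin N), j0 ≠ i →
      lam i (a j0 + ev k) = c i k := by
    intro i j0 k hj0
    have h1 : a j0 + ev k = ev k +ᵥ a j0 := add_comm _ _
    rw [h1, AffineMap.map_vadd, hlam i j0, if_neg (fun hh => hj0 hh.symm)]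
    simp [hc]
  -- divisibility of P by each Λ i
  have hdvd : ∀ i, Λ i ∣ P := by
    intro i
    obtain ⟨k, hk⟩ := hck i
    obtain ⟨j0, hj0⟩ := exists_ne i
    set M : MvPolynomial (Fin N) ℝ :=
      (∑ j ∈ Finset.univ.erase k, C (c i j) * X j) + C (lam i 0) with hM
    have hLM : Λ i = C (c i k) * X k + M := by
      show (∑ j, C (c i j) * X j) + C (lam i 0) = _
      rw [← Finset.add_sum_erase _ _ (Finset.mem_univ k), hM]
      ring
    have hMdeg : M.degreeOf k = 0 := by
      rw [hM]
      have h1 : (∑ j ∈ Finset.univ.erase k, C (c i j) * X j).degreeOf k = 0 := by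
        have h2 := degreeOf_sum_le k (Finset.univ.erase k)
          (fun j => C (c i j) * X j)
        have h3 : ∀ j ∈ Finset.univ.erase k, ((C (c i j) * X j).degreeOf k) = 0 := by
          intro j hj
          have hjk : ¬ k = j := fun hh => (Finset.mem_erase.1 hj).1 hh.symm
          have h4 := degreeOf_mul_le k (C (c i j)) (X j : MvPolynomial (Fin N) ℝ)
          have h5 : (X j : MvPolynomial (Fin N) ℝ).degreeOf k = 0 := by
            rw [degreeOf_X, if_neg hjk]
          have h6 := degreeOf_C (c i j) (σ := Fin N) k
          omega
        have h7 : ((Finset.univ.erase k).sup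
            (fun j => (C (c i j) * X j : MvPolynomial (Fin N) ℝ).degreeOf k)) ≤ 0 :=
          Finset.sup_le (fun j hj => Nat.le_of_eq (h3 j hj))
        omega
      have h8 := degreeOf_add_le k (∑ j ∈ Finset.univ.erase k, C (c i j) * X j)
        (C (lam i 0) : MvPolynomial (Fin N) ℝ)
      have h9 := degreeOf_C (lam i 0) (σ := Fin N) k
      omega
    obtain ⟨Q, R, hPQR, hRdeg⟩ := exists_decomp k (c i k) hk M hMdeg P
    -- R vanishes on the facet
    have hRz : ∀ x ∈ convexHull ℝ (a '' {j | j ≠ i}),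
        MvPolynomial.eval (x : Fin N → ℝ) R = 0 := by
      intro x hx
      have h1 := hPz i x hx
      have h2 : MvPolynomial.eval (x : Fin N → ℝ) (Λ i) = 0 :=
        (hΛeval i x).trans (hlamz i x hx)
      rw [hPQR, ← hLM, map_add, map_mul, h2, zero_mul, zero_add] at h1
      exact h1
    -- R vanishes on the cylinder
    have hRcyl : ∀ x ∈ (convexHull ℝ (a '' {j | j ≠ i})
        + (Submodule.span ℝ {ev k} : Set (EuclideanSpace ℝ (Fin N)))),
        MvPolynomial.eval (x : Fin N → ℝ) R = 0 := by
      intro x hx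
      rw [Set.mem_add] at hx
      obtain ⟨y, hy, z, hz, rfl⟩ := hx
      obtain ⟨t, rfl⟩ := Submodule.mem_span_singleton.1 hz
      have hxy : ((y + t • ev k : EuclideanSpace ℝ (Fin N)) : Fin N → ℝ)
          = Function.update (y : Fin N → ℝ) k ((y : Fin N → ℝ) k + t) := by
        funext m
        by_cases hm : m = k
        · subst hm
          show (y : Fin N → ℝ) m + t * (if m = m then 1 else 0) = _
          rw [Function.update_self, if_pos rfl, mul_one]
        · show (y : Fin N → ℝ) m + t * (if k = m then 1 else 0) = _
          rw [Function.update_of_ne hm, if_neg (fun hh => hm hh.symm), mul_zero, add_zero]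
      rw [hxy, eval_indep hRdeg]
      exact hRz y hy
    -- the perturbed family
    set b : Fin (N + 1) → EuclideanSpace ℝ (Fin N) :=
      Function.update a i (a j0 + ev k) with hb
    have hbAI : AffineIndependent ℝ b := by
      rw [affineIndependent_iff]
      intro s w hw hsum
      have hbv : ∀ j, lam i (b j) = if j = i then c i k else 0 := by
        intro j
        by_cases hji : j = i
        · subst hji
          rw [hb, Function.update_self, hbval j j0 k hj0, if_pos rfl]
        · rw [hb, Function.update_of_ne hji, hlam i j,
            if_neg (fun hh => hji hh.symm), if_neg hji]
      -- apply lam i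
      have hlin : ∑ j ∈ s, w j * lam i (b j) = 0 := by
        have h1 : (lam i).linear (∑ j ∈ s, w j • b j)
            = ∑ j ∈ s, w j • (lam i).linear (b j) := by
          rw [map_sum]
          exact Finset.sum_congr rfl fun j _ => (lam i).linear.map_smul _ _
        rw [hsum, map_zero] at h1
        have h2 : ∀ j, (lam i).linear (b j) = lam i (b j) - lam i 0 := by
          intro j
          have h3 : lam i (b j +ᵥ (0 : EuclideanSpace ℝ (Fin N)))
              = (lam i).linear (b j) +ᵥ lam i 0 := AffineMap.map_vadd _ _ _
          simp only [vadd_eq_add, add_zero] at h3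
          rw [h3]
          ring
        have h3 : ∑ j ∈ s, w j • (lam i (b j) - lam i 0) = 0 := by
          rw [Finset.sum_congr rfl (fun j _ => by rw [← h2 j])]
          exact h1.symm
        have h4 : ∑ j ∈ s, (w j * lam i (b j) - w j * lam i 0) = 0 := by
          rw [← h3]
          exact Finset.sum_congr rfl fun j _ => by rw [smul_eq_mul]; ring
        rw [Finset.sum_sub_distrib, ← Finset.sum_mul, hw, zero_mul, sub_zero] at h4
        exact h4
      have hwi : ∀ j ∈ s, j = i → w j = 0 := by
        intro j hj hji
        have h5 : ∑ x ∈ s, w x * lam i (b x) = if i ∈ s then w i * c i k else 0 := by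
          rw [Finset.sum_congr rfl (fun x _ => by rw [hbv x, mul_ite, mul_zero])]
          exact Finset.sum_ite_eq' s i (fun x => w x * c i k)
        have h6 : w i * c i k = 0 := by
          have h7 := (h5.symm.trans hlin)
          rwa [if_pos (hji ▸ hj)] at h7
        rw [hji]
        rcases mul_eq_zero.1 h6 with h | h
        · exact h
        · exact absurd h hk
      have hsum2 : ∑ j ∈ s, w j • a j = 0 := by
        rw [← hsum]
        apply Finset.sum_congr rfl
        intro j hj
        by_cases hji : j = i
        · rw [hwi j hj hji, zero_smul, zero_smul]
        · simp only [hb, Function.update_of_ne hji]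
      exact fun e he => affineIndependent_iff.1 ha s w hw hsum2 e he
    -- the hull of b is contained in the cylinder
    have hcyl_conv : Convex ℝ (convexHull ℝ (a '' {j | j ≠ i})
        + (Submodule.span ℝ {ev k} : Set (EuclideanSpace ℝ (Fin N)))) :=
      (convex_convexHull ℝ _).add (Submodule.span ℝ {ev k}).convex
    have hrange : Set.range b ⊆ convexHull ℝ (a '' {j | j ≠ i})
        + (Submodule.span ℝ {ev k} : Set (EuclideanSpace ℝ (Fin N))) := by
      rintro _ ⟨j, rfl⟩
      by_cases hji : j = i
      · subst hji
        exact ⟨a j0, subset_convexHull ℝ _ ⟨j0, hj0, rfl⟩, ev k,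
          Submodule.mem_span_singleton_self _, by simp [hb]⟩
      · exact ⟨a j, subset_convexHull ℝ _ ⟨j, hji, rfl⟩, 0,
          (Submodule.span ℝ {ev k}).zero_mem, by simp [hb, Function.update_of_ne hji]⟩
    have hSsub := convexHull_min hrange hcyl_conv
    have hint : (interior (convexHull ℝ (Set.range b))).Nonempty := by
      rw [(convex_convexHull ℝ _).interior_nonempty_iff_affineSpan_eq_top,
        affineSpan_convexHull, hbAI.affineSpan_eq_top_iff_card_eq_finrank_add_one]
      simp [finrank_euclideanSpace_fin]
    have hR0 : R = 0 := mv_zero_of_interior R hint (fun x hx => hRcyl x (hSsub hx))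
    exact ⟨Q, by rw [hPQR, hR0, add_zero, hLM]⟩
  -- primality and non-associateness
  have hprime : ∀ i, Prime (Λ i) := by
    intro i
    obtain ⟨k, hk⟩ := hck i
    exact prime_linear k (c i) (lam i 0) hk
  have hnot : ∀ i j, i ≠ j → ¬ Λ i ∣ Λ j := by
    rintro i j hij ⟨h, hh⟩
    have h1 := congrArg (MvPolynomial.eval ((a j : EuclideanSpace ℝ (Fin N)) : Fin N → ℝ)) hh
    rw [map_mul, hΛeval i (a j), hΛeval j (a j), hlam j j, hlam i j,
      if_pos rfl, if_neg hij] at h1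
    simpa using h1
  obtain ⟨Q, hPQ⟩ : (∏ i, Λ i) ∣ P :=
    prod_dvd_of_primes Finset.univ Λ P (fun i _ => hprime i) (fun i _ => hdvd i)
      (fun i _ j _ hij => hnot i j hij)
  -- degrees of the Λ i
  have hΛne : ∀ i, Λ i ≠ 0 := by
    intro i h
    have h1 := hΛeval i (a i)
    rw [h, map_zero, hlam i i, if_pos rfl] at h1
    exact one_ne_zero h1.symm
  have hΛdeg : ∀ i, (Λ i).totalDegree = 1 := by
    intro i
    apply le_antisymm
    · apply le_trans (totalDegree_add _ _)
      apply max_le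
      · apply le_trans (totalDegree_finset_sum _ _)
        apply Finset.sup_le
        intro j _
        apply le_trans (totalDegree_mul _ _)
        rw [totalDegree_C, totalDegree_X]
      · rw [totalDegree_C]; omega
    · by_contra hcon
      have h0 : (Λ i).totalDegree = 0 := by omega
      obtain ⟨j0, hj0⟩ := exists_ne i
      have h1 := eval_const_of_totalDegree_zero h0
        ((a i : EuclideanSpace ℝ (Fin N)) : Fin N → ℝ)
        ((a j0 : EuclideanSpace ℝ (Fin N)) : Fin N → ℝ)
      rw [hΛeval i (a i), hΛeval i (a j0), hlam i i, hlam i j0, if_pos rfl,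
        if_neg (fun hh => hj0 hh.symm)] at h1
      exact one_ne_zero h1
  have hprodne : (∏ i, Λ i) ≠ 0 := Finset.prod_ne_zero_iff.2 (fun i _ => hΛne i)
  have hproddeg : (∏ i, Λ i).totalDegree = N + 1 := by
    rw [totalDegree_prod_eq _ _ (fun i _ => hΛne i)]
    simp [hΛdeg]
  have hfactor : ∀ x : EuclideanSpace ℝ (Fin N),
      f x = (∏ i, lam i x) * MvPolynomial.eval (x : Fin N → ℝ) Q := by
    intro x
    rw [hfP, hPQ, map_mul]
    congr 1
    rw [map_prod]
    exact Finset.prod_congr rfl fun i _ => hΛeval i x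
  have hQdeg : Q ≠ 0 → (N + 1) + Q.totalDegree ≤ r := by
    intro hQ0
    rw [hPQ, totalDegree_mul_eq' hprodne hQ0, hproddeg] at hPdeg
    exact hPdeg
  refine ⟨fun x => MvPolynomial.eval (x : Fin N → ℝ) Q, Q, ?_, fun x => rfl, hfactor, ?_⟩
  · by_cases hQ0 : Q = 0
    · rw [hQ0, totalDegree_zero]
      omega
    · have := hQdeg hQ0
      omega
  · intro hr
    have hQ0 : Q = 0 := by
      by_contra hQ0
      have := hQdeg hQ0
      omega
    have hP0 : P = 0 := by rw [hPQ, hQ0, mul_zero]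
    constructor
    · intro x
      rw [hfP, hP0]
      simp
    · intro x
      rw [hQ0]
      simp
end
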